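/- arXiv:2310.13666 — 9 statements merged into one kernel-verified Lean document; each statement's English description precedes it below -/
import Mathlib

section
/- The function h₀ satisfies h₀(0) = 0, h₀ is non-decreasing on [0,∞), and h₀ is strictly increasing on (0,∞). -/
/-- `h₀(0) = 0`, `h₀` is non-decreasing on `[0,∞)` and strictly
increasing on `(0,∞)`. -/
theorem stmt4
    (α : ℝ) (hα : 1 ≤ α)
    (ψ : ℝ → ℝ) (hψ0 : ψ 0 = 0)
    (hψ : ∀ x : ℝ, 0 < x → ψ x = Real.exp (-((Real.Gamma (1 + 1/α) / x) ^ α)))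
    (φ : ℝ → ℝ) (hφc : ContinuousOn φ (Set.Ici 0)) (hφm : MonotoneOn φ (Set.Ici 0))
    (hφ0 : φ 0 = -1) (hφ1 : φ 1 = 0)
    (δsp vp vg vs fhalf lcrit l0 lamp lamm lamsg lammin : ℝ)
    (hδsp : 0 < δsp) (hvp : 0 < vp) (hvg : 0 < vg) (hvs : 0 < vs)
    (hfh : 0 < fhalf) (hlc : 0 < lcrit) (hl0 : 0 < l0)
    (hlamp : 0 < lamp) (hlamm : 0 < lamm) (hlamsg : 0 < lamsg) (hlammin : 0 < lammin)
    (ηp ηm : ℝ) (hηp : 0 ≤ ηp) (hηm : 0 ≤ ηm)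
    (N : ℕ) (hN : 0 < N)
    (T : ℝ) (hT : (N : ℝ) * l0 < T)
    (gp gm : ℝ → ℝ)
    (hgp : ∀ ℓ, gp ℓ = 1 / (1 + max lammin ((1 + ηp * φ (ℓ / l0)) * lamp)))
    (hgm : ∀ ℓ, gm ℓ = 1 / (1 + max lammin ((1 + ηm * φ (ℓ / l0)) * lamm)))
    (h1 h0 : ℝ → ℝ)
    (hh1 : ∀ ℓ, h1 ℓ = vp * (gp ℓ + gm ℓ / vg) * ((T - (N : ℝ) * ℓ) / (fhalf + (T - (N : ℝ) * ℓ))))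
    (hh0 : ∀ ℓ, h0 ℓ = ((1 - gp ℓ) + (1 - gm ℓ) / vs) * ψ (ℓ / lcrit)) :
    h0 0 = 0 ∧ MonotoneOn h0 (Set.Ici 0) ∧ StrictMonoOn h0 (Set.Ioi 0) := by

  have hαpos : 0 < α := lt_of_lt_of_le one_pos hα
  have hΓ : 0 < Real.Gamma (1 + 1/α) := Real.Gamma_pos_of_pos (by positivity)
  -- ψ properties
  have hψpos : ∀ x : ℝ, 0 < x → 0 < ψ x := fun x hx => by
    rw [hψ x hx]; exact Real.exp_pos _
  have hψnonneg : ∀ x : ℝ, 0 ≤ x → 0 ≤ ψ x := by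
    intro x hx
    rcases eq_or_lt_of_le hx with h | h
    · simp [← h, hψ0]
    · exact le_of_lt (hψpos x h)
  have hψsm : ∀ x y : ℝ, 0 < x → x < y → ψ x < ψ y := by
    intro x y hx hxy
    rw [hψ x hx, hψ y (hx.trans hxy)]
    apply Real.exp_lt_exp.2
    apply neg_lt_neg
    apply Real.rpow_lt_rpow (div_nonneg hΓ.le (hx.trans hxy).le) _ hαpos
    exact div_lt_div_of_pos_left hΓ hx hxy
  -- denominators
  have hden : ∀ (η lam ℓ : ℝ), 0 < 1 + max lammin ((1 + η * φ (ℓ / l0)) * lam) := by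
    intro η lam ℓ
    have := le_max_left lammin ((1 + η * φ (ℓ / l0)) * lam)
    linarith
  have hfrac : ∀ (η lam ℓ : ℝ),
      0 < 1 / (1 + max lammin ((1 + η * φ (ℓ / l0)) * lam)) ∧
      1 / (1 + max lammin ((1 + η * φ (ℓ / l0)) * lam)) < 1 := by
    intro η lam ℓ
    have h1' := hden η lam ℓ
    have h2 : (1:ℝ) < 1 + max lammin ((1 + η * φ (ℓ / l0)) * lam) := by
      have := le_max_left lammin ((1 + η * φ (ℓ / l0)) * lam)
      linarith
    exact ⟨one_div_pos.2 h1', (div_lt_one h1').2 h2⟩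
  have hφle : ∀ a b : ℝ, 0 ≤ a → a ≤ b → φ (a / l0) ≤ φ (b / l0) := by
    intro a b ha hab
    exact hφm (Set.mem_Ici.2 (div_nonneg ha hl0.le))
      (Set.mem_Ici.2 (div_nonneg (ha.trans hab) hl0.le)) (by gcongr)
  have hfrac_mono : ∀ (η lam : ℝ), 0 ≤ η → 0 < lam → ∀ a b : ℝ, 0 ≤ a → a ≤ b →
      1 / (1 + max lammin ((1 + η * φ (b / l0)) * lam)) ≤
      1 / (1 + max lammin ((1 + η * φ (a / l0)) * lam)) := by
    intro η lam hη hlam a b ha hab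
    apply one_div_le_one_div_of_le (hden η lam a)
    have h1' : η * φ (a / l0) ≤ η * φ (b / l0) :=
      mul_le_mul_of_nonneg_left (hφle a b ha hab) hη
    have h2 : (1 + η * φ (a / l0)) * lam ≤ (1 + η * φ (b / l0)) * lam := by nlinarith
    have := max_le_max (le_refl lammin) h2
    linarith
  -- A = coefficient
  set A : ℝ → ℝ := fun ℓ => (1 - gp ℓ) + (1 - gm ℓ) / vs with hA
  have hApos : ∀ ℓ, 0 < A ℓ := by
    intro ℓ
    have h1' := (hfrac ηp lamp ℓ).2
    have h2 := (hfrac ηm lamm ℓ).2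
    show 0 < 1 - gp ℓ + (1 - gm ℓ) / vs
    rw [hgp ℓ, hgm ℓ]
    have : 0 < (1 - 1 / (1 + max lammin ((1 + ηm * φ (ℓ / l0)) * lamm))) / vs := by
      apply div_pos (by linarith) hvs
    linarith
  have hAmono : ∀ a b : ℝ, 0 ≤ a → a ≤ b → A a ≤ A b := by
    intro a b ha hab
    have h1' := hfrac_mono ηp lamp hηp hlamp a b ha hab
    have h2 := hfrac_mono ηm lamm hηm hlamm a b ha hab
    show 1 - gp a + (1 - gm a) / vs ≤ 1 - gp b + (1 - gm b) / vs
    rw [hgp a, hgp b, hgm a, hgm b]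
    have : (1 - 1 / (1 + max lammin ((1 + ηm * φ (a / l0)) * lamm))) / vs ≤
        (1 - 1 / (1 + max lammin ((1 + ηm * φ (b / l0)) * lamm))) / vs := by
      apply div_le_div_of_nonneg_right (by linarith) hvs.le
    linarith
  have hh0A : ∀ ℓ, h0 ℓ = A ℓ * ψ (ℓ / lcrit) := fun ℓ => hh0 ℓ
  have hzero : h0 0 = 0 := by
    rw [hh0A 0]
    simp [hψ0]
  have hstrict : StrictMonoOn h0 (Set.Ioi 0) := by
    intro a ha b hb hab
    have ha' : 0 < a := ha
    have hψlt : ψ (a / lcrit) < ψ (b / lcrit) :=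
      hψsm _ _ (div_pos ha' hlc) (by gcongr)
    rw [hh0A a, hh0A b]
    calc A a * ψ (a / lcrit) < A a * ψ (b / lcrit) :=
          mul_lt_mul_of_pos_left hψlt (hApos a)
      _ ≤ A b * ψ (b / lcrit) :=
          mul_le_mul_of_nonneg_right (hAmono a b ha'.le hab.le)
            (hψnonneg _ (div_nonneg (ha'.trans hab).le hlc.le))
  refine ⟨hzero, ?_, hstrict⟩
  intro a ha b hb hab
  rcases eq_or_lt_of_le hab with rfl | hlt
  · exact le_refl _
  rcases eq_or_lt_of_le (Set.mem_Ici.1 ha) with h0a | h0a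
  · rw [← h0a, hzero, hh0A b]
    exact mul_nonneg (hApos b).le (hψnonneg _ (div_nonneg (by linarith) hlc.le))
  · exact (hstrict h0a (h0a.trans hlt) hlt).le
end

section
/- The function h₁ satisfies h₁(0) > 0, h₁(T̃/N) = 0, and h₁ is strictly decreasing on the interval [0, T̃/N]. -/
lemma gaux_pos (x lammin : ℝ) (hlammin : 0 < lammin) :
    0 < 1 / (1 + max lammin x) := by
  have := le_max_left lammin x
  have : 0 < 1 + max lammin x := by linarith
  positivity

lemma gaux_anti (φ : ℝ → ℝ) (hφm : MonotoneOn φ (Set.Ici 0))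
    (l0 η lam lammin : ℝ) (hl0 : 0 < l0) (hη : 0 ≤ η) (hlam : 0 < lam)
    (hlammin : 0 < lammin) {a b : ℝ} (ha : 0 ≤ a) (hab : a ≤ b) :
    1 / (1 + max lammin ((1 + η * φ (b / l0)) * lam)) ≤
    1 / (1 + max lammin ((1 + η * φ (a / l0)) * lam)) := by
  have hb : 0 ≤ b := le_trans ha hab
  have hφ : φ (a / l0) ≤ φ (b / l0) :=
    hφm (Set.mem_Ici.mpr (by positivity)) (Set.mem_Ici.mpr (by positivity))
      (by gcongr)
  have hle : (1 + η * φ (a / l0)) * lam ≤ (1 + η * φ (b / l0)) * lam := by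
    have h := mul_le_mul_of_nonneg_left hφ hη
    nlinarith
  have hmax : max lammin ((1 + η * φ (a / l0)) * lam) ≤
      max lammin ((1 + η * φ (b / l0)) * lam) := max_le_max le_rfl hle
  have hpos : 0 < 1 + max lammin ((1 + η * φ (a / l0)) * lam) := by
    have := le_max_left lammin ((1 + η * φ (a / l0)) * lam); linarith
  exact one_div_le_one_div_of_le hpos (by linarith)

/-- `h₁(0) > 0`, `h₁(T̃/N) = 0`, and `h₁` is strictly decreasing
on `[0, T̃/N]`. -/
theorem stmt5
    (α : ℝ) (hα : 1 ≤ α)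
    (ψ : ℝ → ℝ) (hψ0 : ψ 0 = 0)
    (hψ : ∀ x : ℝ, 0 < x → ψ x = Real.exp (-((Real.Gamma (1 + 1/α) / x) ^ α)))
    (φ : ℝ → ℝ) (hφc : ContinuousOn φ (Set.Ici 0)) (hφm : MonotoneOn φ (Set.Ici 0))
    (hφ0 : φ 0 = -1) (hφ1 : φ 1 = 0)
    (δsp vp vg vs fhalf lcrit l0 lamp lamm lamsg lammin : ℝ)
    (hδsp : 0 < δsp) (hvp : 0 < vp) (hvg : 0 < vg) (hvs : 0 < vs)
    (hfh : 0 < fhalf) (hlc : 0 < lcrit) (hl0 : 0 < l0)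
    (hlamp : 0 < lamp) (hlamm : 0 < lamm) (hlamsg : 0 < lamsg) (hlammin : 0 < lammin)
    (ηp ηm : ℝ) (hηp : 0 ≤ ηp) (hηm : 0 ≤ ηm)
    (N : ℕ) (hN : 0 < N)
    (T : ℝ) (hT : (N : ℝ) * l0 < T)
    (gp gm : ℝ → ℝ)
    (hgp : ∀ ℓ, gp ℓ = 1 / (1 + max lammin ((1 + ηp * φ (ℓ / l0)) * lamp)))
    (hgm : ∀ ℓ, gm ℓ = 1 / (1 + max lammin ((1 + ηm * φ (ℓ / l0)) * lamm)))
    (h1 h0 : ℝ → ℝ)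
    (hh1 : ∀ ℓ, h1 ℓ = vp * (gp ℓ + gm ℓ / vg) * ((T - (N : ℝ) * ℓ) / (fhalf + (T - (N : ℝ) * ℓ))))
    (hh0 : ∀ ℓ, h0 ℓ = ((1 - gp ℓ) + (1 - gm ℓ) / vs) * ψ (ℓ / lcrit)) :
    0 < h1 0 ∧ h1 (T / (N : ℝ)) = 0 ∧ StrictAntiOn h1 (Set.Icc 0 (T / (N : ℝ))) := by
  have hNpos : (0:ℝ) < N := Nat.cast_pos.mpr hN
  have hTpos : 0 < T := lt_trans (by positivity) hT
  have hgp_pos : ∀ ℓ, 0 < gp ℓ := fun ℓ => by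
    rw [hgp]; exact gaux_pos _ _ hlammin
  have hgm_pos : ∀ ℓ, 0 < gm ℓ := fun ℓ => by
    rw [hgm]; exact gaux_pos _ _ hlammin
  have hgp_anti : ∀ a b : ℝ, 0 ≤ a → a ≤ b → gp b ≤ gp a := fun a b ha hab => by
    rw [hgp, hgp]
    exact gaux_anti φ hφm l0 ηp lamp lammin hl0 hηp hlamp hlammin ha hab
  have hgm_anti : ∀ a b : ℝ, 0 ≤ a → a ≤ b → gm b ≤ gm a := fun a b ha hab => by
    rw [hgm, hgm]
    exact gaux_anti φ hφm l0 ηm lamm lammin hl0 hηm hlamm hlammin ha hab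
  refine ⟨?_, ?_, ?_⟩
  · rw [hh1]
    have h0' : T - (N : ℝ) * 0 = T := by ring
    rw [h0']
    have := hgp_pos 0
    have := hgm_pos 0
    positivity
  · rw [hh1]
    have : T - (N : ℝ) * (T / (N : ℝ)) = 0 := by field_simp; ring
    rw [this]
    simp
  · intro a ha b hb hab
    obtain ⟨ha0, haT⟩ := ha
    obtain ⟨hb0, hbT⟩ := hb
    set Aa := gp a + gm a / vg with hAa
    set Ab := gp b + gm b / vg with hAb
    have hAa_pos : 0 < Aa := by
      have := hgp_pos a; have := hgm_pos a; positivity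
    have hAle : Ab ≤ Aa := by
      have h1' := hgp_anti a b ha0 (le_of_lt hab)
      have h2' := hgm_anti a b ha0 (le_of_lt hab)
      have : gm b / vg ≤ gm a / vg := by gcongr
      simp only [hAa, hAb]; linarith
    set xA := T - (N : ℝ) * a with hxA
    set xB := T - (N : ℝ) * b with hxB
    have hxBA : xB < xA := by
      simp only [hxA, hxB]
      have : (N : ℝ) * a < (N : ℝ) * b := by gcongr
      linarith
    have hxB0 : 0 ≤ xB := by
      have : (N : ℝ) * b ≤ (N : ℝ) * (T / (N : ℝ)) := by gcongr
      have hT' : (N : ℝ) * (T / (N : ℝ)) = T := by field_simp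
      simp only [hxB]; linarith
    have hdB : 0 < fhalf + xB := by linarith
    have hdA : 0 < fhalf + xA := by linarith
    have hBlt : xB / (fhalf + xB) < xA / (fhalf + xA) := by
      rw [div_lt_div_iff₀ hdB hdA]
      nlinarith
    have hBb_nonneg : 0 ≤ xB / (fhalf + xB) := by positivity
    rw [hh1, hh1]
    calc vp * Ab * (xB / (fhalf + xB))
        ≤ vp * Aa * (xB / (fhalf + xB)) := by
          apply mul_le_mul_of_nonneg_right _ hBb_nonneg
          exact mul_le_mul_of_nonneg_left hAle (le_of_lt hvp)
      _ < vp * Aa * (xA / (fhalf + xA)) := by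
          apply mul_lt_mul_of_pos_left hBlt (by positivity)
end

section
/- There exists a unique ℓ_* ∈ (0, T̃/N) such that h₁(ℓ_*) = h₀(ℓ_*). Moreover the function h = h₁ − h₀ is strictly decreasing on [0, T̃/N], with h(ℓ) > 0 for ℓ ∈ [0, ℓ_*) and h(ℓ) < 0 for ℓ ∈ (ℓ_*, T̃/N]. -/
set_option maxHeartbeats 800000 in
/-- there is a unique `ℓ_* ∈ (0, T̃/N)` with `h₁(ℓ_*) = h₀(ℓ_*)`;
moreover `h = h₁ - h₀` is strictly decreasing on `[0, T̃/N]`, positive on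
`[0, ℓ_*)` and negative on `(ℓ_*, T̃/N]`. -/
theorem stmt6
    (α : ℝ) (hα : 1 ≤ α)
    (ψ : ℝ → ℝ) (hψ0 : ψ 0 = 0)
    (hψ : ∀ x : ℝ, 0 < x → ψ x = Real.exp (-((Real.Gamma (1 + 1/α) / x) ^ α)))
    (φ : ℝ → ℝ) (hφc : ContinuousOn φ (Set.Ici 0)) (hφm : MonotoneOn φ (Set.Ici 0))
    (hφ0 : φ 0 = -1) (hφ1 : φ 1 = 0)
    (δsp vp vg vs fhalf lcrit l0 lamp lamm lamsg lammin : ℝ)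
    (hδsp : 0 < δsp) (hvp : 0 < vp) (hvg : 0 < vg) (hvs : 0 < vs)
    (hfh : 0 < fhalf) (hlc : 0 < lcrit) (hl0 : 0 < l0)
    (hlamp : 0 < lamp) (hlamm : 0 < lamm) (hlamsg : 0 < lamsg) (hlammin : 0 < lammin)
    (ηp ηm : ℝ) (hηp : 0 ≤ ηp) (hηm : 0 ≤ ηm)
    (N : ℕ) (hN : 0 < N)
    (T : ℝ) (hT : (N : ℝ) * l0 < T)
    (gp gm : ℝ → ℝ)
    (hgp : ∀ ℓ, gp ℓ = 1 / (1 + max lammin ((1 + ηp * φ (ℓ / l0)) * lamp)))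
    (hgm : ∀ ℓ, gm ℓ = 1 / (1 + max lammin ((1 + ηm * φ (ℓ / l0)) * lamm)))
    (h1 h0 : ℝ → ℝ)
    (hh1 : ∀ ℓ, h1 ℓ = vp * (gp ℓ + gm ℓ / vg) * ((T - (N : ℝ) * ℓ) / (fhalf + (T - (N : ℝ) * ℓ))))
    (hh0 : ∀ ℓ, h0 ℓ = ((1 - gp ℓ) + (1 - gm ℓ) / vs) * ψ (ℓ / lcrit)) :
    ∃ lstar ∈ Set.Ioo 0 (T / (N : ℝ)),
      h1 lstar = h0 lstar ∧
      (∀ ℓ ∈ Set.Ioo 0 (T / (N : ℝ)), h1 ℓ = h0 ℓ → ℓ = lstar) ∧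
      StrictAntiOn (fun ℓ => h1 ℓ - h0 ℓ) (Set.Icc 0 (T / (N : ℝ))) ∧
      (∀ ℓ ∈ Set.Ico 0 lstar, 0 < h1 ℓ - h0 ℓ) ∧
      (∀ ℓ ∈ Set.Ioc lstar (T / (N : ℝ)), h1 ℓ - h0 ℓ < 0) := by
  have hα0 : (0:ℝ) < α := lt_of_lt_of_le one_pos hα
  set c : ℝ := Real.Gamma (1 + 1/α) with hcdef
  have hc : 0 < c := Real.Gamma_pos_of_pos (by positivity)
  have hNpos : (0:ℝ) < (N : ℝ) := by exact_mod_cast hN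
  have hT0 : 0 < T := lt_trans (by positivity) hT
  set D : ℝ := T / (N : ℝ) with hDdef
  have hD0 : 0 < D := div_pos hT0 hNpos
  have hND : (N : ℝ) * D = T := by
    rw [hDdef, mul_comm]; exact div_mul_cancel₀ T hNpos.ne'
  -- nonnegativity of ψ
  have hψnn : ∀ x : ℝ, 0 ≤ x → 0 ≤ ψ x := by
    intro x hx
    rcases eq_or_lt_of_le hx with h | h
    · rw [← h, hψ0]
    · rw [hψ x h]; exact (Real.exp_pos _).le
  -- monotonicity of ψ on [0, ∞)
  have hψmono : MonotoneOn ψ (Set.Ici 0) := by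
    intro x hx y hy hxy
    rcases eq_or_lt_of_le (Set.mem_Ici.mp hx) with h | h
    · rw [← h, hψ0]; exact hψnn y hy
    · have hy' : 0 < y := lt_of_lt_of_le h hxy
      rw [hψ x h, hψ y hy']
      apply Real.exp_le_exp.2
      apply neg_le_neg
      apply Real.rpow_le_rpow (by positivity) _ hα0.le
      exact div_le_div_of_nonneg_left hc.le h hxy
  -- continuity of ψ on [0, ∞)
  have hψcont : ContinuousOn ψ (Set.Ici 0) := by
    intro x hx
    rcases eq_or_lt_of_le (Set.mem_Ici.mp hx) with h | h
    · -- continuity at 0 by squeezing between 0 and x/c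
      rw [← h]
      have h1 : Filter.Tendsto (fun _ : ℝ => (0:ℝ)) (nhdsWithin 0 (Set.Ici 0)) (nhds 0) :=
        tendsto_const_nhds
      have h2 : Filter.Tendsto (fun x : ℝ => x / c) (nhdsWithin 0 (Set.Ici 0)) (nhds 0) := by
        have := (continuous_id.div_const c).tendsto (0:ℝ)
        simpa using this.mono_left nhdsWithin_le_nhds
      have := tendsto_of_tendsto_of_tendsto_of_le_of_le' h1 h2
        (by
          filter_upwards [self_mem_nhdsWithin] with z hz
          exact hψnn z hz)
        (by
          filter_upwards [self_mem_nhdsWithin,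
            mem_nhdsWithin_of_mem_nhds (Iic_mem_nhds hc)] with z hz1 hz2
          rcases eq_or_lt_of_le (Set.mem_Ici.mp hz1) with hz | hz
          · rw [← hz, hψ0]; positivity
          · rw [hψ z hz]
            have h1z : (1:ℝ) ≤ c / z := (one_le_div hz).2 hz2
            have hcz : 0 < c / z := div_pos hc hz
            have hr : c / z ≤ (c / z) ^ α := by
              calc c / z = (c / z) ^ (1:ℝ) := (Real.rpow_one _).symm
                _ ≤ (c / z) ^ α := Real.rpow_le_rpow_of_exponent_le h1z hα
            calc Real.exp (-((c / z) ^ α)) ≤ Real.exp (-(c / z)) := by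
                  exact Real.exp_le_exp.2 (neg_le_neg hr)
              _ = (Real.exp (c / z))⁻¹ := Real.exp_neg _
              _ ≤ (c / z)⁻¹ := by
                  apply inv_anti₀ hcz
                  have := Real.add_one_le_exp (c / z)
                  linarith
              _ = z / c := inv_div c z)
      unfold ContinuousWithinAt
      rw [hψ0]
      exact this
    · -- continuity at x > 0 via the explicit formula
      have heq : (fun y : ℝ => Real.exp (-((c / y) ^ α))) =ᶠ[nhds x] ψ := by
        filter_upwards [eventually_gt_nhds h] with y hy
        exact (hψ y hy).symm
      have hca : ContinuousAt (fun y : ℝ => Real.exp (-((c / y) ^ α))) x := by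
        apply Real.continuous_exp.continuousAt.comp
        apply ContinuousAt.neg
        apply ContinuousAt.rpow_const
        · exact continuousAt_const.div continuousAt_id h.ne'
        · exact Or.inr hα0.le
      exact (hca.congr heq).continuousWithinAt
  -- generic facts about gp, gm
  have gfacts : ∀ (g : ℝ → ℝ) (η lam : ℝ), 0 ≤ η → 0 < lam →
      (∀ ℓ, g ℓ = 1 / (1 + max lammin ((1 + η * φ (ℓ / l0)) * lam))) →
      (∀ ℓ, 0 < g ℓ ∧ g ℓ < 1) ∧ AntitoneOn g (Set.Ici 0) ∧ ContinuousOn g (Set.Ici 0) := by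
    intro g η lam hη hlam hg
    have hm : ∀ ℓ, lammin ≤ max lammin ((1 + η * φ (ℓ / l0)) * lam) := fun ℓ => le_max_left _ _
    refine ⟨?_, ?_, ?_⟩
    · intro ℓ
      have := hm ℓ
      constructor
      · rw [hg]; apply div_pos one_pos; linarith
      · rw [hg]; rw [div_lt_one (by linarith)]; linarith
    · intro x hx y hy hxy
      rw [hg, hg]
      apply one_div_le_one_div_of_le (by have := hm x; linarith)
      apply add_le_add_right
      apply max_le_max le_rfl
      apply mul_le_mul_of_nonneg_right _ hlam.le
      have hmem1 : x / l0 ∈ Set.Ici (0:ℝ) := div_nonneg hx hl0.le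
      have hmem2 : y / l0 ∈ Set.Ici (0:ℝ) := div_nonneg hy hl0.le
      have hdle : x / l0 ≤ y / l0 := div_le_div_of_nonneg_right hxy hl0.le
      have := hφm hmem1 hmem2 hdle
      nlinarith
    · have hgeq : g = fun ℓ => 1 / (1 + max lammin ((1 + η * φ (ℓ / l0)) * lam)) := funext hg
      rw [hgeq]
      apply ContinuousOn.div continuousOn_const
      · have hw : ContinuousOn (fun ℓ => (1 + η * φ (ℓ / l0)) * lam) (Set.Ici 0) := by
          apply ContinuousOn.mul _ continuousOn_const
          apply ContinuousOn.add continuousOn_const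
          apply ContinuousOn.mul continuousOn_const
          exact hφc.comp ((continuous_id.div_const l0).continuousOn)
            (fun z hz => div_nonneg hz hl0.le)
        apply ContinuousOn.add continuousOn_const
        intro z hz
        exact Filter.Tendsto.max continuousWithinAt_const (hw z hz)
      · intro z hz
        have := hm z
        intro hcontra
        nlinarith
  obtain ⟨hgpB, hgpA, hgpC⟩ := gfacts gp ηp lamp hηp hlamp hgp
  obtain ⟨hgmB, hgmA, hgmC⟩ := gfacts gm ηm lamm hηm hlamm hgm
  have hIccIci : Set.Icc (0:ℝ) D ⊆ Set.Ici 0 := fun z hz => hz.1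
  -- the factor A = gp + gm/vg
  have hApos : ∀ ℓ, 0 < gp ℓ + gm ℓ / vg := by
    intro ℓ
    have h1 := (hgpB ℓ).1
    have h2 := (hgmB ℓ).1
    positivity
  have hAanti : ∀ x ∈ Set.Icc (0:ℝ) D, ∀ y ∈ Set.Icc (0:ℝ) D, x ≤ y →
      gp y + gm y / vg ≤ gp x + gm x / vg := by
    intro x hx y hy hxy
    have h1 := hgpA (hIccIci hx) (hIccIci hy) hxy
    have h2 := hgmA (hIccIci hx) (hIccIci hy) hxy
    have h3 : gm y / vg ≤ gm x / vg := div_le_div_of_nonneg_right h2 hvg.le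
    linarith
  -- the factor B = (T - Nℓ)/(fhalf + (T - Nℓ))
  have htnn : ∀ ℓ ∈ Set.Icc (0:ℝ) D, 0 ≤ T - (N:ℝ) * ℓ := by
    intro ℓ hℓ
    have : (N:ℝ) * ℓ ≤ (N:ℝ) * D := mul_le_mul_of_nonneg_left hℓ.2 hNpos.le
    rw [hND] at this
    linarith
  have hBnn : ∀ ℓ ∈ Set.Icc (0:ℝ) D,
      0 ≤ (T - (N:ℝ) * ℓ) / (fhalf + (T - (N:ℝ) * ℓ)) := by
    intro ℓ hℓ
    have := htnn ℓ hℓ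
    positivity
  have hBanti : ∀ x ∈ Set.Icc (0:ℝ) D, ∀ y ∈ Set.Icc (0:ℝ) D, x < y →
      (T - (N:ℝ) * y) / (fhalf + (T - (N:ℝ) * y))
        < (T - (N:ℝ) * x) / (fhalf + (T - (N:ℝ) * x)) := by
    intro x hx y hy hxy
    have htx := htnn x hx
    have hty := htnn y hy
    have htlt : T - (N:ℝ) * y < T - (N:ℝ) * x := by
      have := mul_lt_mul_of_pos_left hxy hNpos
      linarith
    rw [div_lt_div_iff₀ (by linarith) (by linarith)]
    nlinarith
  -- h1 is strictly antitone on [0, D]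
  have hh1anti : ∀ x ∈ Set.Icc (0:ℝ) D, ∀ y ∈ Set.Icc (0:ℝ) D, x < y → h1 y < h1 x := by
    intro x hx y hy hxy
    rw [hh1, hh1]
    have hA := hAanti x hx y hy hxy.le
    have hAx := hApos x
    have hB := hBanti x hx y hy hxy
    have hBy := hBnn y hy
    calc vp * (gp y + gm y / vg) * ((T - (N:ℝ) * y) / (fhalf + (T - (N:ℝ) * y)))
        ≤ vp * (gp x + gm x / vg) * ((T - (N:ℝ) * y) / (fhalf + (T - (N:ℝ) * y))) := by
          apply mul_le_mul_of_nonneg_right _ hBy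
          exact mul_le_mul_of_nonneg_left hA hvp.le
      _ < vp * (gp x + gm x / vg) * ((T - (N:ℝ) * x) / (fhalf + (T - (N:ℝ) * x))) := by
          apply mul_lt_mul_of_pos_left hB
          positivity
  -- h0 is monotone on [0, D]
  have hCnn : ∀ ℓ, 0 < (1 - gp ℓ) + (1 - gm ℓ) / vs := by
    intro ℓ
    have h1 := (hgpB ℓ).2
    have h2 := (hgmB ℓ).2
    have : 0 < 1 - gp ℓ := by linarith
    have : 0 < 1 - gm ℓ := by linarith
    positivity
  have hCmono : ∀ x ∈ Set.Icc (0:ℝ) D, ∀ y ∈ Set.Icc (0:ℝ) D, x ≤ y →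
      (1 - gp x) + (1 - gm x) / vs ≤ (1 - gp y) + (1 - gm y) / vs := by
    intro x hx y hy hxy
    have h1 := hgpA (hIccIci hx) (hIccIci hy) hxy
    have h2 := hgmA (hIccIci hx) (hIccIci hy) hxy
    have h3 : (1 - gm x) / vs ≤ (1 - gm y) / vs :=
      div_le_div_of_nonneg_right (by linarith) hvs.le
    linarith
  have hψdnn : ∀ ℓ ∈ Set.Icc (0:ℝ) D, 0 ≤ ψ (ℓ / lcrit) := by
    intro ℓ hℓ
    exact hψnn _ (div_nonneg hℓ.1 hlc.le)
  have hh0mono : ∀ x ∈ Set.Icc (0:ℝ) D, ∀ y ∈ Set.Icc (0:ℝ) D, x ≤ y → h0 x ≤ h0 y := by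
    intro x hx y hy hxy
    rw [hh0, hh0]
    apply mul_le_mul (hCmono x hx y hy hxy)
      (hψmono (div_nonneg hx.1 hlc.le) (div_nonneg hy.1 hlc.le)
        (div_le_div_of_nonneg_right hxy hlc.le))
      (hψdnn x hx) (hCnn y).le
  -- the difference h = h1 - h0 is strictly antitone on [0, D]
  have hstrict : StrictAntiOn (fun ℓ => h1 ℓ - h0 ℓ) (Set.Icc 0 D) := by
    intro x hx y hy hxy
    have h1' := hh1anti x hx y hy hxy
    have h0' := hh0mono x hx y hy hxy.le
    simp only []
    linarith
  -- continuity of h on [0, D]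
  have hh1cont : ContinuousOn h1 (Set.Icc 0 D) := by
    have : h1 = fun ℓ => vp * (gp ℓ + gm ℓ / vg) *
        ((T - (N:ℝ) * ℓ) / (fhalf + (T - (N:ℝ) * ℓ))) := funext hh1
    rw [this]
    apply ContinuousOn.mul
    · exact continuousOn_const.mul
        ((hgpC.mono hIccIci).add ((hgmC.mono hIccIci).div_const vg))
    · apply ContinuousOn.div
      · exact (continuous_const.sub (continuous_const.mul continuous_id)).continuousOn
      · exact (continuous_const.add
          (continuous_const.sub (continuous_const.mul continuous_id))).continuousOn
      · intro z hz
        have := htnn z hz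
        intro hcontra
        nlinarith
  have hh0cont : ContinuousOn h0 (Set.Icc 0 D) := by
    have : h0 = fun ℓ => ((1 - gp ℓ) + (1 - gm ℓ) / vs) * ψ (ℓ / lcrit) := funext hh0
    rw [this]
    apply ContinuousOn.mul
    · exact ((continuousOn_const.sub (hgpC.mono hIccIci)).add
        ((continuousOn_const.sub (hgmC.mono hIccIci)).div_const vs))
    · exact (hψcont.mono (fun z hz => hz)).comp
        ((continuous_id.div_const lcrit).continuousOn)
        (fun z hz => div_nonneg hz.1 hlc.le)
  have hcont : ContinuousOn (fun ℓ => h1 ℓ - h0 ℓ) (Set.Icc 0 D) := hh1cont.sub hh0cont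
  -- endpoint values
  have hval0 : 0 < h1 0 - h0 0 := by
    rw [hh1, hh0]
    have : ψ ((0:ℝ) / lcrit) = 0 := by rw [zero_div, hψ0]
    rw [this, mul_zero, mul_zero, sub_zero]
    have hA := hApos 0
    have h' : 0 < (T - 0) / (fhalf + (T - 0)) := by
      rw [sub_zero]
      apply div_pos hT0; linarith
    exact mul_pos (mul_pos hvp hA) h'
  have hvalD : h1 D - h0 D < 0 := by
    have h1D : h1 D = 0 := by
      rw [hh1, hND]
      simp
    have h0D : 0 < h0 D := by
      rw [hh0]
      apply mul_pos (hCnn D)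
      rw [hψ _ (div_pos hD0 hlc)]
      exact Real.exp_pos _
    linarith
  -- intermediate value theorem
  have hsub := intermediate_value_Ioo' hD0.le hcont
  have h0mem : (0:ℝ) ∈ Set.Ioo (h1 D - h0 D) (h1 0 - h0 0) := ⟨hvalD, hval0⟩
  obtain ⟨lstar, hls, hval⟩ := hsub h0mem
  have hlsIcc : lstar ∈ Set.Icc (0:ℝ) D := ⟨hls.1.le, hls.2.le⟩
  refine ⟨lstar, hls, ?_, ?_, hstrict, ?_, ?_⟩
  · have : h1 lstar - h0 lstar = 0 := hval
    linarith
  · intro ℓ hℓ heq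
    apply hstrict.injOn ⟨hℓ.1.le, hℓ.2.le⟩ hlsIcc
    show h1 ℓ - h0 ℓ = h1 lstar - h0 lstar
    have hval' : h1 lstar - h0 lstar = 0 := hval
    linarith
  · intro ℓ hℓ
    have hℓIcc : ℓ ∈ Set.Icc (0:ℝ) D := ⟨hℓ.1, le_of_lt (lt_trans hℓ.2 hls.2)⟩
    have h' : h1 lstar - h0 lstar < h1 ℓ - h0 ℓ := hstrict hℓIcc hlsIcc hℓ.2
    have hval' : h1 lstar - h0 lstar = 0 := hval
    linarith
  · intro ℓ hℓ
    have hℓIcc : ℓ ∈ Set.Icc (0:ℝ) D := ⟨le_of_lt (lt_trans hls.1 hℓ.1), hℓ.2⟩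
    have h' : h1 ℓ - h0 ℓ < h1 lstar - h0 lstar := hstrict hlsIcc hℓIcc hℓ.1
    have hval' : h1 lstar - h0 lstar = 0 := hval
    linarith
end

section
/- On the boundary of the closed box [0, T̃/N] × [0,1] × [0,1] the vector field F points into the interior in the following componentwise sense. For every (ℓ, g^+, g^-) ∈ [0, T̃/N] × [0,1] × [0,1]: (i) if g^+ = 0 then F₂ = 1 > 0; (ii) if g^+ = 1 then F₂ < 0; (iii) if g^- = 0 then F₃ = 1/λ_{s→g} > 0; (iv) if g^- = 1 then F₃ < 0; (v) if ℓ = 0 and g^+ + g^- > 0 then F₁ > 0; (vi) if ℓ = T̃/N and g^+ + g^- < 2 then F₁ < 0. -/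
/-- on the boundary of the box `[0,T̃/N] × [0,1] × [0,1]` the
vector field `F` points into the interior, componentwise. -/
theorem stmt8
    (α : ℝ) (hα : 1 ≤ α)
    (ψ : ℝ → ℝ) (hψ0 : ψ 0 = 0)
    (hψ : ∀ x : ℝ, 0 < x → ψ x = Real.exp (-((Real.Gamma (1 + 1/α) / x) ^ α)))
    (φ : ℝ → ℝ) (hφc : ContinuousOn φ (Set.Ici 0)) (hφm : MonotoneOn φ (Set.Ici 0))
    (hφ0 : φ 0 = -1) (hφ1 : φ 1 = 0)
    (δsp vp vg vs fhalf lcrit l0 lamp lamm lamsg lammin : ℝ)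
    (hδsp : 0 < δsp) (hvp : 0 < vp) (hvg : 0 < vg) (hvs : 0 < vs)
    (hfh : 0 < fhalf) (hlc : 0 < lcrit) (hl0 : 0 < l0)
    (hlamp : 0 < lamp) (hlamm : 0 < lamm) (hlamsg : 0 < lamsg) (hlammin : 0 < lammin)
    (ηp ηm : ℝ) (hηp : 0 ≤ ηp) (hηm : 0 ≤ ηm)
    (N : ℕ) (hN : 0 < N)
    (T : ℝ) (hT : (N : ℝ) * l0 < T)
    (F1 F2 F3 : ℝ → ℝ → ℝ → ℝ)
    (hF1 : ∀ ℓ a b, F1 ℓ a b = δsp * (vp * (a + b / vg) * ((T - (N : ℝ) * ℓ) / (fhalf + (T - (N : ℝ) * ℓ))) - ((1 - a) + (1 - b) / vs) * ψ (ℓ / lcrit)))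
    (hF2 : ∀ ℓ a b, F2 ℓ a b = (1 - a) - a * max lammin ((1 + ηp * φ (ℓ / l0)) * lamp))
    (hF3 : ∀ ℓ a b, F3 ℓ a b = (1 / lamsg) * ((1 - b) - b * max lammin ((1 + ηm * φ (ℓ / l0)) * lamm))) :
    ∀ ℓ ∈ Set.Icc 0 (T / (N : ℝ)), ∀ a ∈ Set.Icc (0:ℝ) 1, ∀ b ∈ Set.Icc (0:ℝ) 1,
      (a = 0 → F2 ℓ a b = 1 ∧ (0:ℝ) < 1) ∧
      (a = 1 → F2 ℓ a b < 0) ∧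
      (b = 0 → F3 ℓ a b = 1 / lamsg ∧ 0 < 1 / lamsg) ∧
      (b = 1 → F3 ℓ a b < 0) ∧
      (ℓ = 0 → 0 < a + b → 0 < F1 ℓ a b) ∧
      (ℓ = T / (N : ℝ) → a + b < 2 → F1 ℓ a b < 0) := by
  intro ℓ hℓ a ha b hb
  have hNpos : (0:ℝ) < N := by exact_mod_cast hN
  have hT0 : 0 < T := lt_trans (by positivity) hT
  refine ⟨?_, ?_, ?_, ?_, ?_, ?_⟩
  · intro h; subst h; simp [hF2]
  · intro h; subst h
    rw [hF2]
    have : lammin ≤ max lammin ((1 + ηp * φ (ℓ / l0)) * lamp) := le_max_left _ _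
    nlinarith
  · intro h; subst h
    constructor
    · rw [hF3]; ring
    · positivity
  · intro h; subst h
    rw [hF3]
    have : lammin ≤ max lammin ((1 + ηm * φ (ℓ / l0)) * lamm) := le_max_left _ _
    have h1 : (1:ℝ) - 1 - 1 * max lammin ((1 + ηm * φ (ℓ / l0)) * lamm) < 0 := by nlinarith
    have h2 : 0 < 1 / lamsg := by positivity
    nlinarith
  · intro h hab; subst h
    rw [hF1]
    have hψz : ψ (0 / lcrit) = 0 := by rw [zero_div]; exact hψ0
    rw [hψz]
    have hab' : 0 < a + b / vg := by
      rcases lt_or_eq_of_le ha.1 with h | h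
      · have : 0 ≤ b / vg := div_nonneg hb.1 hvg.le
        linarith
      · have hb' : 0 < b := by linarith [ha.1, hb.1]
        have : 0 < b / vg := div_pos hb' hvg
        linarith
    have hq : 0 < (T - (N:ℝ) * 0) / (fhalf + (T - (N:ℝ) * 0)) := by
      simp only [mul_zero, sub_zero]; positivity
    simp only [mul_zero, sub_zero]
    exact mul_pos hδsp (by simpa using mul_pos (mul_pos hvp hab') hq)
  · intro h hab; subst h
    rw [hF1]
    have hz : T - (N:ℝ) * (T / (N:ℝ)) = 0 := by field_simp; ring
    rw [hz]
    have hℓpos : 0 < T / (N:ℝ) / lcrit := div_pos (div_pos hT0 hNpos) hlc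
    have hψpos : 0 < ψ (T / (N:ℝ) / lcrit) := by
      rw [hψ _ hℓpos]; exact Real.exp_pos _
    have hsum : 0 < (1 - a) + (1 - b) / vs := by
      rcases lt_or_eq_of_le hb.2 with h | h
      · have h1 : 0 < (1 - b) / vs := div_pos (by linarith) hvs
        linarith [ha.2]
      · have ha' : a < 1 := by linarith
        have : 0 ≤ (1 - b) / vs := div_nonneg (by linarith) hvs.le
        linarith
    have hpp : 0 < ((1 - a) + (1 - b) / vs) * ψ (T / (N:ℝ) / lcrit) := mul_pos hsum hψpos
    simp only [zero_div, mul_zero, zero_sub]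
    nlinarith [mul_pos hδsp hpp]
end

section
/- Assume in addition that the catastrophe shape function φ is Lipschitz continuous on the interval [0, T̃/(N ℓ₀)]. Then the vector field F is Lipschitz continuous on the closed box [0, T̃/N] × [0,1] × [0,1]: there exists K > 0 such that ‖F(x) − F(y)‖ ≤ K ‖x − y‖ for all x, y in the box. -/
section Stmt10Aux

/- ### Auxiliary machinery: Lipschitz-and-bounded functions -/

variable {E : Type*} [PseudoMetricSpace E] {s : Set E}

/-- Lipschitz-and-bounded on a set. -/
def Stmt10LipB (f : E → ℝ) (s : Set E) : Prop :=
  (∃ K : NNReal, LipschitzOnWith K f s) ∧ (∃ A : ℝ, ∀ x ∈ s, |f x| ≤ A)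

namespace Stmt10LipB

theorem of_lip_bd {f : E → ℝ} {K : NNReal} {A : ℝ} (h : LipschitzOnWith K f s)
    (hb : ∀ x ∈ s, |f x| ≤ A) : Stmt10LipB f s := ⟨⟨K, h⟩, ⟨A, hb⟩⟩

theorem const (c : ℝ) : Stmt10LipB (fun _ => c) s :=
  of_lip_bd ((LipschitzWith.const c).lipschitzOnWith) (fun _ _ => le_abs_self _)

theorem add {f g : E → ℝ} (hf : Stmt10LipB f s) (hg : Stmt10LipB g s) :
    Stmt10LipB (fun x => f x + g x) s := by
  obtain ⟨⟨Kf, hKf⟩, Af, hAf⟩ := hf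
  obtain ⟨⟨Kg, hKg⟩, Ag, hAg⟩ := hg
  refine of_lip_bd (K := Kf + Kg) (A := Af + Ag) ?_ ?_
  · rw [lipschitzOnWith_iff_dist_le_mul] at *
    intro x hx y hy
    calc dist (f x + g x) (f y + g y) ≤ dist (f x) (f y) + dist (g x) (g y) :=
          dist_add_add_le _ _ _ _
      _ ≤ Kf * dist x y + Kg * dist x y := add_le_add (hKf x hx y hy) (hKg x hx y hy)
      _ = (Kf + Kg : NNReal) * dist x y := by push_cast; ring
  · intro x hx
    exact (abs_add_le _ _).trans (add_le_add (hAf x hx) (hAg x hx))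

theorem neg {f : E → ℝ} (hf : Stmt10LipB f s) : Stmt10LipB (fun x => -f x) s := by
  obtain ⟨⟨Kf, hKf⟩, Af, hAf⟩ := hf
  refine of_lip_bd (K := Kf) (A := Af) ?_ ?_
  · rw [lipschitzOnWith_iff_dist_le_mul] at *
    intro x hx y hy
    simpa [Real.dist_eq, abs_sub_comm, neg_sub_neg] using hKf x hx y hy
  · intro x hx; simpa using hAf x hx

theorem sub {f g : E → ℝ} (hf : Stmt10LipB f s) (hg : Stmt10LipB g s) :
    Stmt10LipB (fun x => f x - g x) s := by
  simpa [sub_eq_add_neg] using hf.add hg.neg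

theorem mul {f g : E → ℝ} (hf : Stmt10LipB f s) (hg : Stmt10LipB g s) :
    Stmt10LipB (fun x => f x * g x) s := by
  obtain ⟨⟨Kf, hKf⟩, Af, hAf⟩ := hf
  obtain ⟨⟨Kg, hKg⟩, Ag, hAg⟩ := hg
  refine of_lip_bd (K := (|Af| * Kg + |Ag| * Kf).toNNReal) (A := |Af| * |Ag|) ?_ ?_
  · rw [lipschitzOnWith_iff_dist_le_mul] at *
    intro x hx y hy
    have h1 : |f x| ≤ |Af| := (hAf x hx).trans (le_abs_self _)
    have h2 : |g y| ≤ |Ag| := (hAg y hy).trans (le_abs_self _)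
    have key : dist (f x * g x) (f y * g y)
        ≤ |Af| * dist (g x) (g y) + |Ag| * dist (f x) (f y) := by
      rw [Real.dist_eq, Real.dist_eq, Real.dist_eq]
      calc |f x * g x - f y * g y| = |f x * (g x - g y) + g y * (f x - f y)| := by ring_nf
        _ ≤ |f x * (g x - g y)| + |g y * (f x - f y)| := abs_add_le _ _
        _ = |f x| * |g x - g y| + |g y| * |f x - f y| := by rw [abs_mul, abs_mul]
        _ ≤ |Af| * |g x - g y| + |Ag| * |f x - f y| := by
            gcongr
    have hco : ((|Af| * Kg + |Ag| * Kf).toNNReal : ℝ) = |Af| * Kg + |Ag| * Kf := by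
      apply Real.coe_toNNReal
      positivity
    rw [hco]
    calc dist (f x * g x) (f y * g y)
        ≤ |Af| * dist (g x) (g y) + |Ag| * dist (f x) (f y) := key
      _ ≤ |Af| * (Kg * dist x y) + |Ag| * (Kf * dist x y) := by
          gcongr <;>
            first | exact abs_nonneg _ | exact hKg x hx y hy | exact hKf x hx y hy
      _ = (|Af| * Kg + |Ag| * Kf) * dist x y := by ring
  · intro x hx
    rw [abs_mul]
    exact mul_le_mul ((hAf x hx).trans (le_abs_self _)) ((hAg x hx).trans (le_abs_self _))
      (abs_nonneg _) (abs_nonneg _)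

theorem max' {f g : E → ℝ} (hf : Stmt10LipB f s) (hg : Stmt10LipB g s) :
    Stmt10LipB (fun x => max (f x) (g x)) s := by
  obtain ⟨⟨Kf, hKf⟩, Af, hAf⟩ := hf
  obtain ⟨⟨Kg, hKg⟩, Ag, hAg⟩ := hg
  refine of_lip_bd (K := max Kf Kg) (A := max Af Ag) ?_ ?_
  · rw [lipschitzOnWith_iff_dist_le_mul] at *
    intro x hx y hy
    rw [Real.dist_eq]
    calc |max (f x) (g x) - max (f y) (g y)| ≤ max |f x - f y| |g x - g y| :=
          abs_max_sub_max_le_max _ _ _ _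
      _ ≤ max ((Kf : ℝ) * dist x y) ((Kg : ℝ) * dist x y) := by
          apply max_le_max
          · simpa [Real.dist_eq] using hKf x hx y hy
          · simpa [Real.dist_eq] using hKg x hx y hy
      _ ≤ (max Kf Kg : NNReal) * dist x y := by
          rw [max_le_iff]
          constructor <;> gcongr <;>
            simp [NNReal.coe_le_coe, le_max_left, le_max_right, NNReal.coe_max]
  · intro x hx
    have h1 := hAf x hx
    have h2 := hAg x hx
    rw [abs_le] at *
    constructor
    · calc -max Af Ag ≤ -Af := by simp [le_max_left]
        _ ≤ f x := h1.1
        _ ≤ max (f x) (g x) := le_max_left _ _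
    · exact max_le (h1.2.trans (le_max_left _ _)) (h2.2.trans (le_max_right _ _))

theorem div_const {f : E → ℝ} (hf : Stmt10LipB f s) (d : ℝ) :
    Stmt10LipB (fun x => f x / d) s := by
  simpa [div_eq_mul_inv] using hf.mul (const d⁻¹)

end Stmt10LipB

/- ### Auxiliary analytic facts -/

theorem stmt10_poly_exp {u : ℝ} (hu : 0 ≤ u) : (u + u ^ 2) * Real.exp (-u) ≤ 5 := by
  have h1 : u ≤ Real.exp u := by
    have := Real.add_one_le_exp u; linarith
  have h2 : u / 2 ≤ Real.exp (u / 2) := by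
    have := Real.add_one_le_exp (u / 2); linarith
  have h3 : u ^ 2 ≤ 4 * Real.exp u := by
    have h4 : (u / 2) ^ 2 ≤ Real.exp (u / 2) ^ 2 := by
      apply sq_le_sq' _ h2; nlinarith [Real.exp_pos (u/2)]
    have h5 : Real.exp (u / 2) ^ 2 = Real.exp u := by
      rw [sq, ← Real.exp_add]; norm_num
    nlinarith
  have hep : 0 < Real.exp u := Real.exp_pos u
  have hprod : Real.exp (-u) * Real.exp u = 1 := by
    rw [← Real.exp_add]; simp
  nlinarith [Real.exp_pos (-u)]

/-- the active-MT proportion function is Lipschitz on `[0, ∞)`. -/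
theorem stmt10_psi_lip {α c : ℝ} (hα : 1 ≤ α) (hc : 0 < c) (ψ : ℝ → ℝ)
    (hψ0 : ψ 0 = 0) (hψ : ∀ x : ℝ, 0 < x → ψ x = Real.exp (-((c / x) ^ α))) :
    LipschitzOnWith (5 * α / c).toNNReal ψ (Set.Ici 0) := by
  have hα0 : 0 < α := lt_of_lt_of_le one_pos hα
  set C : ℝ := 5 * α / c with hC
  have hC0 : 0 ≤ C := by positivity
  have hCco : ((C.toNNReal : ℝ)) = C := Real.coe_toNNReal _ hC0
  have keybound : ∀ t : ℝ, 0 < t → t ^ (α + 1) * Real.exp (-(t ^ α)) ≤ 5 := by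
    intro t ht
    set u : ℝ := t ^ α with hu
    have hu0 : 0 < u := Real.rpow_pos_of_pos ht α
    have htu : t = u ^ (1 / α) := by
      rw [hu, ← Real.rpow_mul ht.le, mul_one_div, div_self hα0.ne', Real.rpow_one]
    have ht1 : t ≤ 1 + u := by
      rw [htu]
      rcases le_or_gt u 1 with h | h
      · have : u ^ (1/α) ≤ 1 := Real.rpow_le_one hu0.le h (by positivity)
        linarith
      · have : u ^ (1/α) ≤ u ^ (1:ℝ) := by
          apply Real.rpow_le_rpow_of_exponent_le h.le
          rw [div_le_one hα0]; exact hα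
        rw [Real.rpow_one] at this; linarith
    have hsplit : t ^ (α + 1) = u * t := by
      rw [Real.rpow_add ht, Real.rpow_one, hu]
    rw [hsplit]
    have hb : u * t ≤ u + u ^ 2 := by nlinarith
    calc u * t * Real.exp (-u) ≤ (u + u ^ 2) * Real.exp (-u) := by
          have := Real.exp_pos (-u); nlinarith
      _ ≤ 5 := stmt10_poly_exp hu0.le
  have hIoi : LipschitzOnWith C.toNNReal ψ (Set.Ioi 0) := by
    set f' : ℝ → ℝ := fun x => Real.exp (-((c / x) ^ α)) * (α * (c / x) ^ (α - 1) * (c / x ^ 2))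
    have hderiv : ∀ x ∈ Set.Ioi (0:ℝ), HasDerivWithinAt ψ (f' x) (Set.Ioi 0) x := by
      intro x hx
      have hx0 : (0:ℝ) < x := hx
      have h1 : HasDerivAt (fun y : ℝ => c / y) (-(c / x ^ 2)) x := by
        have := ((hasDerivAt_inv hx0.ne').const_mul c)
        simpa [div_eq_mul_inv, neg_mul, mul_comm] using this
      have h2 : HasDerivAt (fun y : ℝ => (c / y) ^ α)
          (α * (c / x) ^ (α - 1) * -(c / x ^ 2)) x := by
        have hb : (0:ℝ) < c / x := div_pos hc hx0
        have := (Real.hasDerivAt_rpow_const (x := c / x) (p := α) (Or.inl hb.ne')).comp x h1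
        simpa [Function.comp_def, mul_comm, mul_left_comm] using this
      have h3 : HasDerivAt (fun y : ℝ => Real.exp (-((c / y) ^ α)))
          (Real.exp (-((c / x) ^ α)) * -(α * (c / x) ^ (α - 1) * -(c / x ^ 2))) x :=
        (h2.neg).exp
      have h4 : HasDerivAt (fun y : ℝ => Real.exp (-((c / y) ^ α))) (f' x) x := by
        convert h3 using 1; simp only [f']; ring
      have h5 : HasDerivWithinAt (fun y : ℝ => Real.exp (-((c / y) ^ α))) (f' x)
          (Set.Ioi 0) x := h4.hasDerivWithinAt
      apply h5.congr
      · intro y hy; exact hψ y hy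
      · exact hψ x hx0
    apply (convex_Ioi (0:ℝ)).lipschitzOnWith_of_nnnorm_hasDerivWithin_le hderiv
    intro x hx
    have hx0 : (0:ℝ) < x := hx
    rw [← NNReal.coe_le_coe, coe_nnnorm, hCco, Real.norm_eq_abs]
    have ht : (0:ℝ) < c / x := div_pos hc hx0
    have hf'eq : f' x = (α / c) * ((c / x) ^ (α + 1) * Real.exp (-((c / x) ^ α))) := by
      have e1 : (c / x) ^ (α - 1) * (c / x ^ 2) = (c / x) ^ (α + 1) / c := by
        have e2 : (c / x) ^ (α + 1) = (c / x) ^ (α - 1) * (c / x) ^ (2:ℝ) := by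
          rw [← Real.rpow_add ht]
          ring_nf
        rw [e2, Real.rpow_two]
        field_simp
      simp only [f']
      rw [mul_assoc α, e1]
      ring
    have hpos : 0 ≤ f' x := by
      rw [hf'eq]
      have := Real.rpow_pos_of_pos ht (α + 1)
      have := Real.exp_pos (-((c / x) ^ α))
      positivity
    rw [abs_of_nonneg hpos, hf'eq, hC]
    have := keybound (c / x) ht
    calc (α / c) * ((c / x) ^ (α + 1) * Real.exp (-((c / x) ^ α))) ≤ (α / c) * 5 := by
          apply mul_le_mul_of_nonneg_left this (by positivity)
      _ = 5 * α / c := by ring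
  have tail : ∀ y : ℝ, 0 < y → ψ y ≤ C * y := by
    intro y hy
    rw [hψ y hy]
    set t : ℝ := c / y with htdef
    have ht : 0 < t := div_pos hc hy
    have hyt : y = c / t := by rw [htdef, div_div_eq_mul_div, mul_div_cancel_left₀ _ hc.ne']
    have h1 : t * Real.exp (-(t ^ α)) ≤ 5 * α := by
      have hu0 : 0 < t ^ α := Real.rpow_pos_of_pos ht α
      have ht1 : t ≤ 1 + t ^ α := by
        rcases le_or_gt t 1 with h | h
        · linarith [hu0.le]
        · have : t ^ (1:ℝ) ≤ t ^ α := Real.rpow_le_rpow_of_exponent_le h.le hα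
          rw [Real.rpow_one] at this; linarith
      have h2 : (1 + t ^ α) * Real.exp (-(t ^ α)) ≤ 2 := by
        have h3 := Real.add_one_le_exp (t ^ α)
        have h4 := Real.exp_pos (t ^ α)
        rw [Real.exp_neg]
        rw [mul_inv_le_iff₀ h4]
        nlinarith
      have h5 := Real.exp_pos (-(t ^ α))
      nlinarith
    have hCe : C * (c / t) = 5 * α / t := by
      rw [hC]; field_simp
    rw [hyt, hCe, le_div_iff₀ ht]
    linarith [h1]
  rw [lipschitzOnWith_iff_dist_le_mul]
  intro x hx y hy
  have hx0 : (0:ℝ) ≤ x := hx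
  have hy0 : (0:ℝ) ≤ y := hy
  have hIoi' := lipschitzOnWith_iff_dist_le_mul.mp hIoi
  have hpsi_nonneg : ∀ z : ℝ, 0 < z → 0 ≤ ψ z := by
    intro z hz; rw [hψ z hz]; positivity
  have zero_case : ∀ w : ℝ, 0 < w → dist (ψ 0) (ψ w) ≤ C.toNNReal * dist 0 w := by
    intro w hw
    rw [hψ0, Real.dist_eq, Real.dist_eq, hCco]
    rw [abs_of_nonpos (by linarith [hpsi_nonneg w hw]), abs_of_nonpos (by linarith)]
    simpa using tail w hw
  rcases eq_or_lt_of_le hx0 with hx0' | hx0'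
  · rcases eq_or_lt_of_le hy0 with hy0' | hy0'
    · simp [← hx0', ← hy0']
    · rw [← hx0']; exact zero_case y hy0'
  · rcases eq_or_lt_of_le hy0 with hy0' | hy0'
    · rw [← hy0', dist_comm (ψ x), dist_comm x]
      exact zero_case x hx0'
    · exact hIoi' x hx0' y hy0'

theorem stmt10_lip_weaken {E F : Type*} [PseudoEMetricSpace E] [PseudoEMetricSpace F]
    {f : E → F} {s : Set E} {K K' : NNReal} (h : LipschitzOnWith K f s) (hK : K ≤ K') :
    LipschitzOnWith K' f s := fun _ hx _ hy =>
  (h hx hy).trans (mul_le_mul_left (ENNReal.coe_le_coe.mpr hK) _)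

/-- `u ↦ u / (m + u)` is Lipschitz on `[0,∞)` when `m > 0`. -/
theorem stmt10_satfun_lip {m : ℝ} (hm : 0 < m) :
    LipschitzOnWith (1 / m).toNNReal (fun u : ℝ => u / (m + u)) (Set.Ici 0) := by
  rw [lipschitzOnWith_iff_dist_le_mul]
  intro u hu v hv
  have hu0 : (0:ℝ) ≤ u := hu
  have hv0 : (0:ℝ) ≤ v := hv
  have hmu : 0 < m + u := by linarith
  have hmv : 0 < m + v := by linarith
  have key : u / (m + u) - v / (m + v) = m * (u - v) / ((m + u) * (m + v)) := by
    field_simp; ring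
  rw [Real.dist_eq, Real.dist_eq, Real.coe_toNNReal _ (by positivity), key, abs_div, abs_mul,
    abs_of_pos hm, abs_of_pos (by positivity : (0:ℝ) < (m + u) * (m + v))]
  rw [div_le_iff₀ (by positivity)]
  have h1 : m * m ≤ (m + u) * (m + v) := by nlinarith
  calc m * |u - v| = |u - v| * m := by ring
    _ ≤ (1 / m * |u - v|) * (m * m) := by
        rw [one_div, inv_mul_eq_div, div_mul_eq_mul_div]
        rw [le_div_iff₀ hm]
        ring_nf
        rfl
    _ ≤ (1 / m * |u - v|) * ((m + u) * (m + v)) := by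
        apply mul_le_mul_of_nonneg_left h1 (by positivity)

theorem stmt10_fst_dist {x y : ℝ × ℝ × ℝ} : dist x.1 y.1 ≤ dist x y := by
  simpa using (LipschitzWith.prod_fst (α := ℝ) (β := ℝ × ℝ)).dist_le_mul x y

end Stmt10Aux

/-- if the shape function `φ` is Lipschitz on `[0, T̃/(Nℓ₀)]`,
then the vector field `F` is Lipschitz on the closed box
`[0,T̃/N] × [0,1] × [0,1]`. -/
theorem stmt10
    (α : ℝ) (hα : 1 ≤ α)
    (ψ : ℝ → ℝ) (hψ0 : ψ 0 = 0)
    (hψ : ∀ x : ℝ, 0 < x → ψ x = Real.exp (-((Real.Gamma (1 + 1/α) / x) ^ α)))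
    (φ : ℝ → ℝ) (hφc : ContinuousOn φ (Set.Ici 0)) (hφm : MonotoneOn φ (Set.Ici 0))
    (hφ0 : φ 0 = -1) (hφ1 : φ 1 = 0)
    (δsp vp vg vs fhalf lcrit l0 lamp lamm lamsg lammin : ℝ)
    (hδsp : 0 < δsp) (hvp : 0 < vp) (hvg : 0 < vg) (hvs : 0 < vs)
    (hfh : 0 < fhalf) (hlc : 0 < lcrit) (hl0 : 0 < l0)
    (hlamp : 0 < lamp) (hlamm : 0 < lamm) (hlamsg : 0 < lamsg) (hlammin : 0 < lammin)
    (ηp ηm : ℝ) (hηp : 0 ≤ ηp) (hηm : 0 ≤ ηm)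
    (N : ℕ) (hN : 0 < N)
    (T : ℝ) (hT : (N : ℝ) * l0 < T)
    (F1 F2 F3 : ℝ → ℝ → ℝ → ℝ)
    (hF1 : ∀ ℓ a b, F1 ℓ a b = δsp * (vp * (a + b / vg) * ((T - (N : ℝ) * ℓ) / (fhalf + (T - (N : ℝ) * ℓ))) - ((1 - a) + (1 - b) / vs) * ψ (ℓ / lcrit)))
    (hF2 : ∀ ℓ a b, F2 ℓ a b = (1 - a) - a * max lammin ((1 + ηp * φ (ℓ / l0)) * lamp))
    (hF3 : ∀ ℓ a b, F3 ℓ a b = (1 / lamsg) * ((1 - b) - b * max lammin ((1 + ηm * φ (ℓ / l0)) * lamm)))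
    (Kφ : NNReal) (hφlip : LipschitzOnWith Kφ φ (Set.Icc 0 (T / ((N : ℝ) * l0))))
    (Fvec : ℝ × ℝ × ℝ → ℝ × ℝ × ℝ)
    (hFvec : ∀ p : ℝ × ℝ × ℝ,
      Fvec p = (F1 p.1 p.2.1 p.2.2, F2 p.1 p.2.1 p.2.2, F3 p.1 p.2.1 p.2.2)) :
    ∃ K : NNReal, 0 < K ∧
      LipschitzOnWith K Fvec
        (Set.Icc 0 (T / (N : ℝ)) ×ˢ Set.Icc (0:ℝ) 1 ×ˢ Set.Icc (0:ℝ) 1) := by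
  set s : Set (ℝ × ℝ × ℝ) := Set.Icc 0 (T / (N : ℝ)) ×ˢ Set.Icc (0:ℝ) 1 ×ˢ Set.Icc (0:ℝ) 1
    with hs
  have hN0 : (0:ℝ) < N := by exact_mod_cast hN
  have hT0 : 0 < T := lt_trans (by positivity) hT
  have hTN : 0 < T / N := by positivity
  -- membership facts
  have hmem : ∀ p : ℝ × ℝ × ℝ, p ∈ s →
      p.1 ∈ Set.Icc (0:ℝ) (T / N) ∧ p.2.1 ∈ Set.Icc (0:ℝ) 1 ∧ p.2.2 ∈ Set.Icc (0:ℝ) 1 :=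
    fun p hp => ⟨hp.1, hp.2.1, hp.2.2⟩
  -- basic coordinate functions
  have lB_l : Stmt10LipB (fun p : ℝ × ℝ × ℝ => p.1) s := by
    refine Stmt10LipB.of_lip_bd (K := 1) (A := T / N)
      ((LipschitzWith.prod_fst).lipschitzOnWith) ?_
    intro p hp
    obtain ⟨⟨h1, h2⟩, -, -⟩ := hmem p hp
    rw [abs_of_nonneg h1]; exact h2
  have lB_a : Stmt10LipB (fun p : ℝ × ℝ × ℝ => p.2.1) s := by
    refine Stmt10LipB.of_lip_bd (K := 1 * 1) (A := 1)
      ((LipschitzWith.prod_fst.comp LipschitzWith.prod_snd).lipschitzOnWith) ?_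
    intro p hp
    obtain ⟨-, ⟨h1, h2⟩, -⟩ := hmem p hp
    rw [abs_of_nonneg h1]; exact h2
  have lB_b : Stmt10LipB (fun p : ℝ × ℝ × ℝ => p.2.2) s := by
    refine Stmt10LipB.of_lip_bd (K := 1 * 1) (A := 1)
      ((LipschitzWith.prod_snd.comp LipschitzWith.prod_snd).lipschitzOnWith) ?_
    intro p hp
    obtain ⟨-, -, h1, h2⟩ := hmem p hp
    rw [abs_of_nonneg h1]; exact h2
  -- first coordinate rescaled by a positive constant, as Lipschitz map
  have div_lip : ∀ m : ℝ, 0 < m →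
      LipschitzOnWith (1/m).toNNReal (fun p : ℝ × ℝ × ℝ => p.1 / m) s := by
    intro m hm
    rw [lipschitzOnWith_iff_dist_le_mul]
    intro x _ y _
    rw [Real.dist_eq, Real.coe_toNNReal _ (by positivity), div_sub_div_same, abs_div,
      abs_of_pos hm]
    have h2 : |x.1 - y.1| ≤ dist x y := by rw [← Real.dist_eq]; exact stmt10_fst_dist
    calc |x.1 - y.1| / m ≤ dist x y / m := by gcongr
      _ = 1 / m * dist x y := by ring
  -- the saturation factor
  have lB_q : Stmt10LipB
      (fun p : ℝ × ℝ × ℝ => (T - (N:ℝ) * p.1) / (fhalf + (T - (N:ℝ) * p.1))) s := by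
    have inner_lip : LipschitzOnWith ((N:ℝ)).toNNReal
        (fun p : ℝ × ℝ × ℝ => T - (N:ℝ) * p.1) s := by
      rw [lipschitzOnWith_iff_dist_le_mul]
      intro x _ y _
      rw [Real.dist_eq, Real.coe_toNNReal _ (by positivity)]
      have : T - (N:ℝ) * x.1 - (T - (N:ℝ) * y.1) = -((N:ℝ) * (x.1 - y.1)) := by ring
      rw [this, abs_neg, abs_mul, abs_of_pos hN0]
      have h2 : |x.1 - y.1| ≤ dist x y := by rw [← Real.dist_eq]; exact stmt10_fst_dist
      exact mul_le_mul_of_nonneg_left h2 (by positivity)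
    have hmapsTo : Set.MapsTo (fun p : ℝ × ℝ × ℝ => T - (N:ℝ) * p.1) s (Set.Ici 0) := by
      intro p hp
      obtain ⟨⟨h1, h2⟩, -, -⟩ := hmem p hp
      simp only [Set.mem_Ici, sub_nonneg]
      calc (N:ℝ) * p.1 ≤ (N:ℝ) * (T / N) := by
            apply mul_le_mul_of_nonneg_left h2 (by positivity)
        _ = T := by field_simp
    refine Stmt10LipB.of_lip_bd (K := (1/fhalf).toNNReal * ((N:ℝ)).toNNReal) (A := 1)
      ((stmt10_satfun_lip hfh).comp inner_lip hmapsTo) ?_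
    intro p hp
    have h0 : (0:ℝ) ≤ T - (N:ℝ) * p.1 := hmapsTo hp
    have hpos : 0 < fhalf + (T - (N:ℝ) * p.1) := by linarith
    rw [abs_of_nonneg (by positivity)]
    rw [div_le_one hpos]
    linarith
  -- the ψ composite
  set c : ℝ := Real.Gamma (1 + 1/α) with hcdef
  have hα0 : 0 < α := lt_of_lt_of_le one_pos hα
  have hc : 0 < c := Real.Gamma_pos_of_pos (by positivity)
  have psi_lip := stmt10_psi_lip hα hc ψ hψ0 hψ
  have lB_psi : Stmt10LipB (fun p : ℝ × ℝ × ℝ => ψ (p.1 / lcrit)) s := by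
    have hmaps : Set.MapsTo (fun p : ℝ × ℝ × ℝ => p.1 / lcrit) s (Set.Ici 0) := by
      intro p hp
      obtain ⟨⟨h1, -⟩, -, -⟩ := hmem p hp
      exact Set.mem_Ici.mpr (by positivity)
    refine Stmt10LipB.of_lip_bd
      (K := (5 * α / c).toNNReal * (1/lcrit).toNNReal) (A := 1)
      (psi_lip.comp (div_lip lcrit hlc) hmaps) ?_
    intro p hp
    obtain ⟨⟨h1, -⟩, -, -⟩ := hmem p hp
    have hz : (0:ℝ) ≤ p.1 / lcrit := by positivity
    rcases eq_or_lt_of_le hz with hz' | hz'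
    · rw [← hz', hψ0]; norm_num
    · rw [hψ _ hz', abs_of_nonneg (Real.exp_nonneg _)]
      apply Real.exp_le_one_iff.mpr
      simp only [neg_nonpos]
      positivity
  -- the φ composite
  have lB_phi : Stmt10LipB (fun p : ℝ × ℝ × ℝ => φ (p.1 / l0)) s := by
    have hM : T / ((N:ℝ) * l0) = (T / N) / l0 := by
      rw [div_div]
    have hmaps : Set.MapsTo (fun p : ℝ × ℝ × ℝ => p.1 / l0) s
        (Set.Icc 0 (T / ((N:ℝ) * l0))) := by
      intro p hp
      obtain ⟨⟨h1, h2⟩, -, -⟩ := hmem p hp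
      constructor
      · positivity
      · rw [hM]
        show p.1 / l0 ≤ T / (N:ℝ) / l0
        gcongr
    refine Stmt10LipB.of_lip_bd (K := Kφ * (1/l0).toNNReal)
      (A := (Kφ : ℝ) * (T / ((N:ℝ) * l0)) + 1)
      (hφlip.comp (div_lip l0 hl0) hmaps) ?_
    intro p hp
    have hz := hmaps hp
    have h0mem : (0:ℝ) ∈ Set.Icc 0 (T / ((N:ℝ) * l0)) := by
      constructor
      · exact le_rfl
      · positivity
    have hd := (lipschitzOnWith_iff_dist_le_mul.mp hφlip) _ hz 0 h0mem
    rw [Real.dist_eq, Real.dist_eq, hφ0, sub_neg_eq_add, sub_zero] at hd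
    have habs : |p.1 / l0| ≤ T / ((N:ℝ) * l0) := by
      rw [abs_of_nonneg hz.1]; exact hz.2
    calc |φ (p.1 / l0)| = |φ (p.1 / l0) + 1 + (-1)| := by ring_nf
      _ ≤ |φ (p.1 / l0) + 1| + |(-1:ℝ)| := abs_add_le _ _
      _ ≤ (Kφ : ℝ) * (T / ((N:ℝ) * l0)) + 1 := by
          rw [abs_neg, abs_one]
          apply add_le_add_left
          calc |φ (p.1 / l0) + 1| ≤ (Kφ:ℝ) * |p.1 / l0| := hd
            _ ≤ (Kφ:ℝ) * (T / ((N:ℝ) * l0)) := by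
                apply mul_le_mul_of_nonneg_left habs (by positivity)
  -- assemble the three components
  set f1 : ℝ × ℝ × ℝ → ℝ := fun p =>
    δsp * (vp * (p.2.1 + p.2.2 / vg) * ((T - (N:ℝ) * p.1) / (fhalf + (T - (N:ℝ) * p.1)))
      - ((1 - p.2.1) + (1 - p.2.2) / vs) * ψ (p.1 / lcrit)) with hf1
  set f2 : ℝ × ℝ × ℝ → ℝ := fun p =>
    (1 - p.2.1) - p.2.1 * max lammin ((1 + ηp * φ (p.1 / l0)) * lamp) with hf2
  set f3 : ℝ × ℝ × ℝ → ℝ := fun p =>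
    (1 / lamsg) * ((1 - p.2.2) - p.2.2 * max lammin ((1 + ηm * φ (p.1 / l0)) * lamm)) with hf3
  have lBf1 : Stmt10LipB f1 s :=
    (Stmt10LipB.const δsp).mul
      ((((Stmt10LipB.const vp).mul (lB_a.add (lB_b.div_const vg))).mul lB_q).sub
        ((((Stmt10LipB.const 1).sub lB_a).add
          (((Stmt10LipB.const 1).sub lB_b).div_const vs)).mul lB_psi))
  have lBf2 : Stmt10LipB f2 s :=
    ((Stmt10LipB.const 1).sub lB_a).sub
      (lB_a.mul ((Stmt10LipB.const lammin).max'
        (((Stmt10LipB.const 1).add ((Stmt10LipB.const ηp).mul lB_phi)).mul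
          (Stmt10LipB.const lamp))))
  have lBf3 : Stmt10LipB f3 s :=
    (Stmt10LipB.const (1 / lamsg)).mul
      (((Stmt10LipB.const 1).sub lB_b).sub
        (lB_b.mul ((Stmt10LipB.const lammin).max'
          (((Stmt10LipB.const 1).add ((Stmt10LipB.const ηm).mul lB_phi)).mul
            (Stmt10LipB.const lamm)))))
  obtain ⟨⟨K1, hK1⟩, -⟩ := lBf1
  obtain ⟨⟨K2, hK2⟩, -⟩ := lBf2
  obtain ⟨⟨K3, hK3⟩, -⟩ := lBf3
  have hFe : Fvec = fun p => (f1 p, f2 p, f3 p) := by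
    funext p
    rw [hFvec, hF1, hF2, hF3]
  refine ⟨max 1 (max K1 (max K2 K3)), lt_of_lt_of_le one_pos (le_max_left _ _), ?_⟩
  rw [hFe]
  have := hK1.prodMk (hK2.prodMk hK3)
  exact stmt10_lip_weaken this (le_trans (max_le_max (le_refl K1) (le_refl _)) (le_max_right _ _))
end

section
/- Let α ≥ 1 and let L̄, v̄_g^+, v̄_g^-, v̄_s^+, v̄_s^-, τ̄_g^+, τ̄_g^- be positive reals. Suppose w > 0 satisfies w · exp(−w^α) = (v̄_g^+ τ̄_g^+ / L̄) · Γ(1+1/α) · ln 2. Define λ_{g→s}^± = 1/τ̄_g^±, λ_{s→g}^+ = (v̄_s^+ / L̄) · Γ(1+1/α) · ln 2 / w, λ_{s→g}^- = λ_{s→g}^+ · (v̄_s^- /v̄_s^+) · (v̄_g^+ τ̄_g^+)/(v̄_g^- τ̄_g^-), and L_crit = v̄_s^+ ln 2 / λ_{s→g}^+. Then both steady-state flux-balance constraints hold at the target length L̄: v̄_g^+ λ_{s→g}^+ / (λ_{g→s}^+ + λ_{s→g}^+) = (v̄_s^+ λ_{g→s}^+ / (λ_{g→s}^+ + λ_{s→g}^+))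 · ψ_α(L̄/L_crit) and v̄_g^- λ_{s→g}^- / (λ_{g→s}^- + λ_{s→g}^-) = (v̄_s^- λ_{g→s}^- / (λ_{g→s}^- + λ_{s→g}^-)) · ψ_α(L̄/L_crit); in particular the tubulin flux into the microtubule pool equals the flux out at average length L̄, so L̄ is the steady-state average microtubule length. -/
/-- if `w > 0` solves `w·exp(-w^α) = (v̄_g⁺ τ̄_g⁺/L̄)·Γ(1+1/α)·ln 2`
and the rates are defined by `λ_{g→s}^± = 1/τ̄_g^±`,
`λ_{s→g}^+ = (v̄_s^+/L̄)·Γ(1+1/α)·ln 2 / w`,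
`λ_{s→g}⁻ = λ_{s→g}⁺ · (v̄_s⁻ / v̄_s⁺) · (v̄_g⁺ τ̄_g⁺)/(v̄_g⁻ τ̄_g⁻)`, and
`L_crit = v̄_s^+ ln 2 / λ_{s→g}^+`, then both steady-state flux-balance
constraints hold at the target length `L̄`. -/
theorem stmt13 (α : ℝ) (hα : 1 ≤ α)
    (ψ : ℝ → ℝ) (hψ0 : ψ 0 = 0)
    (hψ : ∀ x : ℝ, 0 < x → ψ x = Real.exp (-((Real.Gamma (1 + 1/α) / x) ^ α)))
    (Lbar vgp vgm vsp vsm tgp tgm : ℝ)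
    (hL : 0 < Lbar) (hvgp : 0 < vgp) (hvgm : 0 < vgm) (hvsp : 0 < vsp)
    (hvsm : 0 < vsm) (htgp : 0 < tgp) (htgm : 0 < tgm)
    (w : ℝ) (hw : 0 < w)
    (hweq : w * Real.exp (-(w ^ α)) =
      (vgp * tgp / Lbar) * Real.Gamma (1 + 1/α) * Real.log 2)
    (lgsp lgsm lsgp lsgm Lcrit : ℝ)
    (hlgsp : lgsp = 1 / tgp) (hlgsm : lgsm = 1 / tgm)
    (hlsgp : lsgp = (vsp / Lbar) * Real.Gamma (1 + 1/α) * Real.log 2 / w)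
    (hlsgm : lsgm = lsgp * (vsm / vsp) * ((vgp * tgp) / (vgm * tgm)))
    (hLcrit : Lcrit = vsp * Real.log 2 / lsgp) :
    vgp * lsgp / (lgsp + lsgp) = (vsp * lgsp / (lgsp + lsgp)) * ψ (Lbar / Lcrit) ∧
    vgm * lsgm / (lgsm + lsgm) = (vsm * lgsm / (lgsm + lsgm)) * ψ (Lbar / Lcrit) := by

  have hG : 0 < Real.Gamma (1 + 1/α) := Real.Gamma_pos_of_pos (by positivity)
  have hc : 0 < Real.log 2 := Real.log_pos one_lt_two
  have hlsgp' : 0 < lsgp := by rw [hlsgp]; positivity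
  have hLcrit' : 0 < Lcrit := by rw [hLcrit]; positivity
  have hx : 0 < Lbar / Lcrit := by positivity
  have hpsi : ψ (Lbar / Lcrit) = Real.exp (-(w ^ α)) := by
    rw [hψ _ hx]
    have h1 : Real.Gamma (1 + 1/α) / (Lbar / Lcrit) = w := by
      rw [hLcrit, hlsgp]
      field_simp
    rw [h1]
  have hE : Real.exp (-(w ^ α)) =
      vgp * tgp / Lbar * Real.Gamma (1 + 1/α) * Real.log 2 / w := by
    rw [eq_div_iff hw.ne', mul_comm]; exact hweq
  constructor
  · rw [hpsi, div_mul_eq_mul_div, hE, hlsgp, hlgsp]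
    field_simp
  · rw [hpsi, div_mul_eq_mul_div, hE, hlsgm, hlsgp, hlgsm]
    field_simp
end

section
/- Hold all parameters fixed except the total tubulin T̃, and for each T̃ > N ℓ₀ let ℓ_*(T̃) ∈ (0, T̃/N) denote the unique solution of h₁(ℓ; T̃) = h₀(ℓ), where h₁(ℓ; T̃) = v^+ (g_*^+(ℓ) + g_*^-(ℓ)/v_g)(T̃ − Nℓ)/(f_{1/2} + T̃ − Nℓ). Then ℓ_* is strictly increasing in T̃: if N ℓ₀ < T̃₁ < T̃₂ then ℓ_*(T̃₁) < ℓ_*(T̃₂). -/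
/-- holding all parameters fixed except the total tubulin `T̃`,
the unique steady-state length `ℓ_*(T̃) ∈ (0, T̃/N)` solving
`h₁(ℓ; T̃) = h₀(ℓ)` is strictly increasing in `T̃`. -/
theorem stmt14
    (α : ℝ) (hα : 1 ≤ α)
    (ψ : ℝ → ℝ) (hψ0 : ψ 0 = 0)
    (hψ : ∀ x : ℝ, 0 < x → ψ x = Real.exp (-((Real.Gamma (1 + 1/α) / x) ^ α)))
    (φ : ℝ → ℝ) (hφc : ContinuousOn φ (Set.Ici 0)) (hφm : MonotoneOn φ (Set.Ici 0))
    (hφ0 : φ 0 = -1) (hφ1 : φ 1 = 0)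
    (δsp vp vg vs fhalf lcrit l0 lamp lamm lamsg lammin : ℝ)
    (hδsp : 0 < δsp) (hvp : 0 < vp) (hvg : 0 < vg) (hvs : 0 < vs)
    (hfh : 0 < fhalf) (hlc : 0 < lcrit) (hl0 : 0 < l0)
    (hlamp : 0 < lamp) (hlamm : 0 < lamm) (hlamsg : 0 < lamsg) (hlammin : 0 < lammin)
    (ηp ηm : ℝ) (hηp0 : 0 ≤ ηp) (hηm0 : 0 ≤ ηm)
    (N : ℕ) (hN : 0 < N)
    (gp gm : ℝ → ℝ)
    (hgp : ∀ ℓ, gp ℓ = 1 / (1 + max lammin ((1 + ηp * φ (ℓ / l0)) * lamp)))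
    (hgm : ∀ ℓ, gm ℓ = 1 / (1 + max lammin ((1 + ηm * φ (ℓ / l0)) * lamm)))
    (h1 : ℝ → ℝ → ℝ) (h0 : ℝ → ℝ)
    (hh1 : ∀ T ℓ, h1 T ℓ = vp * (gp ℓ + gm ℓ / vg) * ((T - (N : ℝ) * ℓ) / (fhalf + (T - (N : ℝ) * ℓ))))
    (hh0 : ∀ ℓ, h0 ℓ = ((1 - gp ℓ) + (1 - gm ℓ) / vs) * ψ (ℓ / lcrit))
    (lstar : ℝ → ℝ)
    (hlstar : ∀ T : ℝ, (N : ℝ) * l0 < T →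
      lstar T ∈ Set.Ioo 0 (T / (N : ℝ)) ∧ h1 T (lstar T) = h0 (lstar T)) :
    ∀ T₁ T₂ : ℝ, (N : ℝ) * l0 < T₁ → T₁ < T₂ → lstar T₁ < lstar T₂ := by
  intro T₁ T₂ hT₁ hT12
  have hαpos : (0:ℝ) < α := lt_of_lt_of_le one_pos hα
  have hΓ : 0 < Real.Gamma (1 + 1/α) := Real.Gamma_pos_of_pos (by positivity)
  -- ψ is nonnegative and nondecreasing on [0,∞)
  have hψnn : ∀ x, 0 ≤ x → 0 ≤ ψ x := by
    intro x hx
    rcases eq_or_lt_of_le hx with h | h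
    · simp [← h, hψ0]
    · rw [hψ x h]; positivity
  have hψmono : ∀ a b, 0 ≤ a → a ≤ b → ψ a ≤ ψ b := by
    intro a b ha hab
    rcases eq_or_lt_of_le ha with h | h
    · rw [← h, hψ0]; exact hψnn b (le_trans ha hab)
    · have hb : 0 < b := lt_of_lt_of_le h hab
      rw [hψ a h, hψ b hb]
      apply Real.exp_le_exp.2
      apply neg_le_neg
      have hdiv : Real.Gamma (1 + 1/α) / b ≤ Real.Gamma (1 + 1/α) / a := by gcongr
      exact Real.rpow_le_rpow (by positivity) hdiv hαpos.le
  -- monotonicity/bounds of the g functions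
  have key : ∀ (η lam : ℝ), 0 ≤ η → 0 < lam → ∀ a b : ℝ, 0 ≤ a → a ≤ b →
      1 / (1 + max lammin ((1 + η * φ (b / l0)) * lam)) ≤
      1 / (1 + max lammin ((1 + η * φ (a / l0)) * lam)) := by
    intro η lam hη hlam a b ha hab
    have hma : a / l0 ∈ Set.Ici (0:ℝ) := by
      simp only [Set.mem_Ici]; positivity
    have hmb : b / l0 ∈ Set.Ici (0:ℝ) := by
      simp only [Set.mem_Ici]
      have : (0:ℝ) ≤ b := le_trans ha hab
      positivity
    have hφab : φ (a / l0) ≤ φ (b / l0) := hφm hma hmb (by gcongr)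
    have hmul : (1 + η * φ (a / l0)) * lam ≤ (1 + η * φ (b / l0)) * lam := by
      apply mul_le_mul_of_nonneg_right _ hlam.le
      nlinarith
    have hmax : max lammin ((1 + η * φ (a / l0)) * lam) ≤
        max lammin ((1 + η * φ (b / l0)) * lam) := max_le_max le_rfl hmul
    have hposa : 0 < 1 + max lammin ((1 + η * φ (a / l0)) * lam) := by
      have := le_max_left lammin ((1 + η * φ (a / l0)) * lam); linarith
    exact one_div_le_one_div_of_le hposa (by linarith)
  have keybd : ∀ (η lam : ℝ) (ℓ : ℝ),
      0 < 1 / (1 + max lammin ((1 + η * φ (ℓ / l0)) * lam)) ∧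
      1 / (1 + max lammin ((1 + η * φ (ℓ / l0)) * lam)) ≤ 1 := by
    intro η lam ℓ
    have hm := le_max_left lammin ((1 + η * φ (ℓ / l0)) * lam)
    have hpos : 0 < 1 + max lammin ((1 + η * φ (ℓ / l0)) * lam) := by linarith
    constructor
    · positivity
    · rw [div_le_one hpos]; linarith
  have hgp_anti : ∀ a b : ℝ, 0 ≤ a → a ≤ b → gp b ≤ gp a := by
    intro a b ha hab; rw [hgp, hgp]; exact key ηp lamp hηp0 hlamp a b ha hab
  have hgm_anti : ∀ a b : ℝ, 0 ≤ a → a ≤ b → gm b ≤ gm a := by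
    intro a b ha hab; rw [hgm, hgm]; exact key ηm lamm hηm0 hlamm a b ha hab
  have hgp_bd : ∀ ℓ, 0 < gp ℓ ∧ gp ℓ ≤ 1 := by
    intro ℓ; rw [hgp]; exact keybd ηp lamp ℓ
  have hgm_bd : ∀ ℓ, 0 < gm ℓ ∧ gm ℓ ≤ 1 := by
    intro ℓ; rw [hgm]; exact keybd ηm lamm ℓ
  -- h0 is nondecreasing on [0,∞)
  have hh0mono : ∀ a b : ℝ, 0 ≤ a → a ≤ b → h0 a ≤ h0 b := by
    intro a b ha hab
    rw [hh0, hh0]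
    have c1 : 1 - gp a ≤ 1 - gp b := by have := hgp_anti a b ha hab; linarith
    have c2 : (1 - gm a) / vs ≤ (1 - gm b) / vs := by
      have := hgm_anti a b ha hab; gcongr <;> linarith
    have cnn : 0 ≤ (1 - gp a) + (1 - gm a) / vs := by
      have h1' := (hgp_bd a).2
      have h2' := (hgm_bd a).2
      have : 0 ≤ (1 - gm a) / vs := by
        apply div_nonneg _ hvs.le; linarith
      linarith
    have hψa := hψnn (a / lcrit) (by positivity)
    have hψab := hψmono (a / lcrit) (b / lcrit) (by positivity) (by gcongr)
    apply mul_le_mul (by linarith) hψab hψa (by linarith)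
  -- main argument
  have hT₂ : (N : ℝ) * l0 < T₂ := lt_trans hT₁ hT12
  obtain ⟨⟨hℓ₁0, hℓ₁T⟩, heq₁⟩ := hlstar T₁ hT₁
  obtain ⟨⟨hℓ₂0, hℓ₂T⟩, heq₂⟩ := hlstar T₂ hT₂
  set ℓ₁ := lstar T₁
  set ℓ₂ := lstar T₂
  by_contra hcon
  push_neg at hcon
  -- so ℓ₂ ≤ ℓ₁ < T₁ / N
  have hNpos : (0:ℝ) < (N : ℝ) := by exact_mod_cast hN
  have hx₁ : 0 < T₁ - (N:ℝ) * ℓ₁ := by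
    have := (lt_div_iff₀ hNpos).1 hℓ₁T; linarith [this]
  have hx₂ : 0 < T₁ - (N:ℝ) * ℓ₂ := by
    have : (N:ℝ) * ℓ₂ ≤ (N:ℝ) * ℓ₁ := by gcongr
    linarith
  have hC₂pos : 0 < vp * (gp ℓ₂ + gm ℓ₂ / vg) := by
    have h1' := (hgp_bd ℓ₂).1
    have h2' := (hgm_bd ℓ₂).1
    have : 0 < gm ℓ₂ / vg := div_pos h2' hvg
    have : 0 < gp ℓ₂ + gm ℓ₂ / vg := by linarith
    positivity
  -- step 1 : h1 T₁ ℓ₁ ≤ h1 T₁ ℓ₂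
  have step1 : h1 T₁ ℓ₁ ≤ h1 T₁ ℓ₂ := by
    rw [hh1, hh1]
    have hCanti : vp * (gp ℓ₁ + gm ℓ₁ / vg) ≤ vp * (gp ℓ₂ + gm ℓ₂ / vg) := by
      have h1' := hgp_anti ℓ₂ ℓ₁ hℓ₂0.le hcon
      have h2' := hgm_anti ℓ₂ ℓ₁ hℓ₂0.le hcon
      have h3' : gm ℓ₁ / vg ≤ gm ℓ₂ / vg := by gcongr
      apply mul_le_mul_of_nonneg_left _ hvp.le
      linarith
    have hF : (T₁ - (N:ℝ) * ℓ₁) / (fhalf + (T₁ - (N:ℝ) * ℓ₁)) ≤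
        (T₁ - (N:ℝ) * ℓ₂) / (fhalf + (T₁ - (N:ℝ) * ℓ₂)) := by
      rw [div_le_div_iff₀ (by linarith) (by linarith)]
      have h4 : (N:ℝ) * ℓ₂ ≤ (N:ℝ) * ℓ₁ := by gcongr
      nlinarith
    have hFnn : 0 ≤ (T₁ - (N:ℝ) * ℓ₁) / (fhalf + (T₁ - (N:ℝ) * ℓ₁)) := by
      apply div_nonneg hx₁.le; linarith
    exact mul_le_mul hCanti hF hFnn hC₂pos.le
  -- step 2 : h1 T₁ ℓ₂ < h1 T₂ ℓ₂
  have step2 : h1 T₁ ℓ₂ < h1 T₂ ℓ₂ := by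
    rw [hh1, hh1]
    apply mul_lt_mul_of_pos_left _ hC₂pos
    rw [div_lt_div_iff₀ (by linarith) (by linarith)]
    have hkey : (T₁ - (N:ℝ)*ℓ₂) * (fhalf + (T₂ - (N:ℝ)*ℓ₂)) -
        (T₂ - (N:ℝ)*ℓ₂) * (fhalf + (T₁ - (N:ℝ)*ℓ₂)) = fhalf * (T₁ - T₂) := by ring
    linarith [hkey, mul_pos hfh (sub_pos.2 hT12)]
  -- step 3 : h0 ℓ₂ ≤ h0 ℓ₁
  have step3 : h0 ℓ₂ ≤ h0 ℓ₁ := hh0mono ℓ₂ ℓ₁ hℓ₂0.le hcon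
  -- contradiction
  have : h0 ℓ₂ < h0 ℓ₂ := by
    calc h0 ℓ₂ ≤ h0 ℓ₁ := step3
      _ = h1 T₁ ℓ₁ := heq₁.symm
      _ ≤ h1 T₁ ℓ₂ := step1
      _ < h1 T₂ ℓ₂ := step2
      _ = h0 ℓ₂ := heq₂
  exact lt_irrefl _ this
end

section
/- Suppose the length-dependence of catastrophe is active at both ends, η^+ > 0 and η^- > 0, and that the admissible catastrophe shape function satisfies φ(x) → ∞ as x → ∞. Then the steady-state average length is uniformly bounded in the total tubulin: there exists ℓ̄ > 0, independent of T̃, such that for every T̃ > N ℓ₀ the unique solution ℓ_*(T̃) ∈ (0, T̃/N) of h₁(ℓ; T̃) = h₀(ℓ) satisfies ℓ_*(T̃) ≤ ℓ̄. -/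
/-- if length-dependent catastrophe is active at both ends
(`η⁺ > 0`, `η⁻ > 0`) and `φ(x) → ∞` as `x → ∞`, then the steady-state average
length is uniformly bounded in the total tubulin: there is `ℓ̄ > 0`,
independent of `T̃`, bounding every solution `ℓ_*(T̃) ∈ (0, T̃/N)` of
`h₁(ℓ; T̃) = h₀(ℓ)`. -/
theorem stmt15
    (α : ℝ) (hα : 1 ≤ α)
    (ψ : ℝ → ℝ) (hψ0 : ψ 0 = 0)
    (hψ : ∀ x : ℝ, 0 < x → ψ x = Real.exp (-((Real.Gamma (1 + 1/α) / x) ^ α)))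
    (φ : ℝ → ℝ) (hφc : ContinuousOn φ (Set.Ici 0)) (hφm : MonotoneOn φ (Set.Ici 0))
    (hφ0 : φ 0 = -1) (hφ1 : φ 1 = 0)
    (δsp vp vg vs fhalf lcrit l0 lamp lamm lamsg lammin : ℝ)
    (hδsp : 0 < δsp) (hvp : 0 < vp) (hvg : 0 < vg) (hvs : 0 < vs)
    (hfh : 0 < fhalf) (hlc : 0 < lcrit) (hl0 : 0 < l0)
    (hlamp : 0 < lamp) (hlamm : 0 < lamm) (hlamsg : 0 < lamsg) (hlammin : 0 < lammin)
    (ηp ηm : ℝ) (hηp0 : 0 ≤ ηp) (hηm0 : 0 ≤ ηm)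
    (N : ℕ) (hN : 0 < N)
    (gp gm : ℝ → ℝ)
    (hgp : ∀ ℓ, gp ℓ = 1 / (1 + max lammin ((1 + ηp * φ (ℓ / l0)) * lamp)))
    (hgm : ∀ ℓ, gm ℓ = 1 / (1 + max lammin ((1 + ηm * φ (ℓ / l0)) * lamm)))
    (h1 : ℝ → ℝ → ℝ) (h0 : ℝ → ℝ)
    (hh1 : ∀ T ℓ, h1 T ℓ = vp * (gp ℓ + gm ℓ / vg) * ((T - (N : ℝ) * ℓ) / (fhalf + (T - (N : ℝ) * ℓ))))
    (hh0 : ∀ ℓ, h0 ℓ = ((1 - gp ℓ) + (1 - gm ℓ) / vs) * ψ (ℓ / lcrit))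
    (hηp : 0 < ηp) (hηm : 0 < ηm)
    (hφtop : Filter.Tendsto φ Filter.atTop Filter.atTop) :
    ∃ lbar : ℝ, 0 < lbar ∧ ∀ T : ℝ, (N : ℝ) * l0 < T →
      ∀ l ∈ Set.Ioo 0 (T / (N : ℝ)), h1 T l = h0 l → l ≤ lbar := by
  set Γ : ℝ := Real.Gamma (1 + 1/α) with hΓdef
  have hΓ : 0 < Γ := Real.Gamma_pos_of_pos (by positivity)
  set c : ℝ := (1/2) * (1 + 1/vs) * Real.exp (-1) with hcdef
  have hcpos : 0 < c := by rw [hcdef]; positivity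
  set ε : ℝ := min (1/2) (c / (vp * (1 + 1/vg))) with hεdef
  have hεpos : 0 < ε := lt_min (by norm_num) (div_pos hcpos (by positivity))
  have hεhalf : ε ≤ 1/2 := min_le_left _ _
  have hεright : ε ≤ c / (vp * (1 + 1/vg)) := min_le_right _ _
  set M : ℝ := max ((1/ε) / (ηp * lamp)) ((1/ε) / (ηm * lamm)) with hMdef
  have hMp : (1/ε) / (ηp * lamp) ≤ M := le_max_left _ _
  have hMm : (1/ε) / (ηm * lamm) ≤ M := le_max_right _ _
  clear_value Γ c ε M
  obtain ⟨K, hK⟩ := (Filter.tendsto_atTop.mp hφtop M).exists_forall_of_atTop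
  refine ⟨max (max (K * l0) (Γ * lcrit)) 1, lt_of_lt_of_le one_pos (le_max_right _ _), ?_⟩
  intro T hT l hl heq
  by_contra hcon
  push_neg at hcon
  have hl0pos : 0 < l := hl.1
  have hlK : K * l0 ≤ l :=
    le_of_lt (lt_of_le_of_lt (le_trans (le_max_left _ _) (le_max_left _ _)) hcon)
  have hlΓ : Γ * lcrit ≤ l :=
    le_of_lt (lt_of_le_of_lt (le_trans (le_max_right _ _) (le_max_left _ _)) hcon)
  have hφM : M ≤ φ (l / l0) := hK _ ((le_div_iff₀ hl0).mpr hlK)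
  -- bounds on gp, gm
  have key : ∀ (η lam : ℝ), 0 < η → 0 < lam → (1/ε) / (η * lam) ≤ M →
      (0 < 1 / (1 + max lammin ((1 + η * φ (l / l0)) * lam)) ∧
       1 / (1 + max lammin ((1 + η * φ (l / l0)) * lam)) ≤ ε) := by
    intro η lam hη hlam hM
    have hηlam : 0 < η * lam := mul_pos hη hlam
    have h1ε : 1/ε ≤ η * M * lam := by
      have h := (div_le_iff₀ hηlam).mp hM
      have hr : η * lam * M = η * M * lam := by ring
      linarith
    have hφl : η * M * lam ≤ η * φ (l / l0) * lam :=
      mul_le_mul_of_nonneg_right (mul_le_mul_of_nonneg_left hφM hη.le) hlam.le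
    have hD : 1 + 1/ε ≤ 1 + max lammin ((1 + η * φ (l / l0)) * lam) := by
      have h1 : (1/ε : ℝ) ≤ (1 + η * φ (l / l0)) * lam := by
        have hr : (1 + η * φ (l / l0)) * lam = lam + η * φ (l / l0) * lam := by ring
        linarith
      have h2 := le_max_right lammin ((1 + η * φ (l / l0)) * lam)
      linarith
    have hεinv : (0:ℝ) < 1 + 1/ε := by positivity
    have hDpos : 0 < 1 + max lammin ((1 + η * φ (l / l0)) * lam) := by linarith
    refine ⟨by positivity, ?_⟩
    rw [div_le_iff₀ hDpos]
    have hfs : ε * (1 + 1/ε) = ε + 1 := by field_simp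
    have hmul := mul_le_mul_of_nonneg_left hD hεpos.le
    linarith
  obtain ⟨hgp_pos, hgp_le⟩ := (hgp l) ▸ key ηp lamp hηp hlamp hMp
  obtain ⟨hgm_pos, hgm_le⟩ := (hgm l) ▸ key ηm lamm hηm hlamm hMm
  -- bound on ψ
  have hx : 0 < l / lcrit := by positivity
  have hxΓ : Γ ≤ l / lcrit := (le_div_iff₀ hlc).mpr hlΓ
  have hψl : Real.exp (-1) ≤ ψ (l / lcrit) := by
    rw [hψ _ hx]
    apply Real.exp_le_exp.mpr
    have hb : Γ / (l / lcrit) ≤ 1 := (div_le_one hx).mpr hxΓ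
    have hr : (Γ / (l / lcrit)) ^ α ≤ 1 :=
      Real.rpow_le_one (by positivity) hb (by linarith)
    linarith
  -- h0 lower bound
  have hh0lb : c ≤ h0 l := by
    rw [hh0]
    have h1 : (1/2 : ℝ) ≤ 1 - gp l := by linarith [le_trans hgp_le hεhalf]
    have h2 : (1/2 : ℝ) ≤ 1 - gm l := by linarith [le_trans hgm_le hεhalf]
    have h2' : (1/2 : ℝ) / vs ≤ (1 - gm l) / vs := by gcongr
    have hsum : (1/2) * (1 + 1/vs) ≤ (1 - gp l) + (1 - gm l) / vs := by
      have hr : (1/2 : ℝ) * (1 + 1/vs) = 1/2 + (1/2)/vs := by ring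
      linarith
    have hsumpos : (0:ℝ) < (1/2) * (1 + 1/vs) := by positivity
    have hexp : (0:ℝ) < Real.exp (-1) := Real.exp_pos _
    calc c = (1/2) * (1 + 1/vs) * Real.exp (-1) := hcdef
      _ ≤ ((1 - gp l) + (1 - gm l) / vs) * Real.exp (-1) :=
          mul_le_mul_of_nonneg_right hsum hexp.le
      _ ≤ ((1 - gp l) + (1 - gm l) / vs) * ψ (l / lcrit) :=
          mul_le_mul_of_nonneg_left hψl (by linarith)
  -- h1 upper bound
  have hNpos : (0:ℝ) < N := Nat.cast_pos.mpr hN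
  have hu : 0 < T - (N : ℝ) * l := by
    have h := (lt_div_iff₀ hNpos).mp hl.2
    linarith
  have hfrac : (T - (N : ℝ) * l) / (fhalf + (T - (N : ℝ) * l)) < 1 := by
    rw [div_lt_one (by linarith)]; linarith
  have hsumg : 0 < gp l + gm l / vg := by positivity
  have hεc : vp * (ε + ε / vg) ≤ c := by
    have h3 : 0 < vp * (1 + 1/vg) := by positivity
    have h4 := (le_div_iff₀ h3).mp hεright
    calc vp * (ε + ε / vg) = ε * (vp * (1 + 1/vg)) := by field_simp
      _ ≤ c := h4
  have hh1ub : h1 T l < c := by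
    rw [hh1]
    have hg : gp l + gm l / vg ≤ ε + ε / vg := by
      have hgm' : gm l / vg ≤ ε / vg := by gcongr
      linarith
    have hstep : vp * (gp l + gm l / vg) * ((T - (N : ℝ) * l) / (fhalf + (T - (N : ℝ) * l)))
        < vp * (gp l + gm l / vg) * 1 :=
      mul_lt_mul_of_pos_left hfrac (mul_pos hvp hsumg)
    have hstep2 : vp * (gp l + gm l / vg) * 1 ≤ vp * (ε + ε / vg) := by
      rw [mul_one]; exact mul_le_mul_of_nonneg_left hg hvp.le
    linarith
  rw [heq] at hh1ub
  linarith
end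

section
/- Suppose there is no length-dependence in the catastrophe rate, η^+ = η^- = 0 and λ̃_min ≤ min(λ^+, λ^-), so that the growth fractions are the constants ḡ^± = 1/(1 + λ^±). If the growth capacity exceeds the maximal shrinkage flux, i.e. v^+ (ḡ^+ + ḡ^- /v_g) > (1 − ḡ^+) + (1 − ḡ^-)/v_s, then the steady-state average length grows without bound as total tubulin increases: the unique solution ℓ_*(T̃) ∈ (0, T̃/N) of h₁(ℓ; T̃) = h₀(ℓ) satisfies ℓ_*(T̃) → ∞ as T̃ → ∞. -/
/-- if there is no length-dependence in the catastrophe rate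
(`η⁺ = η⁻ = 0`, `λ̃_min ≤ min(λ⁺, λ⁻)`), so that the growth fractions are the
constants `ḡ^± = 1/(1+λ^±)`, and growth capacity exceeds the maximal
shrinkage flux, then the steady-state length `ℓ_*(T̃)` grows without bound as
`T̃ → ∞`. -/
theorem stmt16
    (α : ℝ) (hα : 1 ≤ α)
    (ψ : ℝ → ℝ) (hψ0 : ψ 0 = 0)
    (hψ : ∀ x : ℝ, 0 < x → ψ x = Real.exp (-((Real.Gamma (1 + 1/α) / x) ^ α)))
    (φ : ℝ → ℝ) (hφc : ContinuousOn φ (Set.Ici 0)) (hφm : MonotoneOn φ (Set.Ici 0))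
    (hφ0 : φ 0 = -1) (hφ1 : φ 1 = 0)
    (δsp vp vg vs fhalf lcrit l0 lamp lamm lamsg lammin : ℝ)
    (hδsp : 0 < δsp) (hvp : 0 < vp) (hvg : 0 < vg) (hvs : 0 < vs)
    (hfh : 0 < fhalf) (hlc : 0 < lcrit) (hl0 : 0 < l0)
    (hlamp : 0 < lamp) (hlamm : 0 < lamm) (hlamsg : 0 < lamsg) (hlammin : 0 < lammin)
    (ηp ηm : ℝ) (hηp0 : 0 ≤ ηp) (hηm0 : 0 ≤ ηm)
    (N : ℕ) (hN : 0 < N)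
    (gp gm : ℝ → ℝ)
    (hgp : ∀ ℓ, gp ℓ = 1 / (1 + max lammin ((1 + ηp * φ (ℓ / l0)) * lamp)))
    (hgm : ∀ ℓ, gm ℓ = 1 / (1 + max lammin ((1 + ηm * φ (ℓ / l0)) * lamm)))
    (h1 : ℝ → ℝ → ℝ) (h0 : ℝ → ℝ)
    (hh1 : ∀ T ℓ, h1 T ℓ = vp * (gp ℓ + gm ℓ / vg) * ((T - (N : ℝ) * ℓ) / (fhalf + (T - (N : ℝ) * ℓ))))
    (hh0 : ∀ ℓ, h0 ℓ = ((1 - gp ℓ) + (1 - gm ℓ) / vs) * ψ (ℓ / lcrit))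
    (hηp : ηp = 0) (hηm : ηm = 0) (hminle : lammin ≤ min lamp lamm)
    (hcap : (1 - 1 / (1 + lamp)) + (1 - 1 / (1 + lamm)) / vs <
      vp * (1 / (1 + lamp) + (1 / (1 + lamm)) / vg))
    (lstar : ℝ → ℝ)
    (hlstar : ∀ T : ℝ, (N : ℝ) * l0 < T →
      lstar T ∈ Set.Ioo 0 (T / (N : ℝ)) ∧ h1 T (lstar T) = h0 (lstar T)) :
    Filter.Tendsto lstar Filter.atTop Filter.atTop := by
  have hgamma : 0 < Real.Gamma (1 + 1/α) :=
    Real.Gamma_pos_of_pos (by positivity)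
  -- growth fractions are constant
  have hgp' : ∀ ℓ, gp ℓ = 1 / (1 + lamp) := by
    intro ℓ
    rw [hgp, hηp]
    rw [show (1 + 0 * φ (ℓ / l0)) * lamp = lamp by ring,
      max_eq_right (le_trans hminle (min_le_left _ _))]
  have hgm' : ∀ ℓ, gm ℓ = 1 / (1 + lamm) := by
    intro ℓ
    rw [hgm, hηm]
    rw [show (1 + 0 * φ (ℓ / l0)) * lamm = lamm by ring,
      max_eq_right (le_trans hminle (min_le_right _ _))]
  set A : ℝ := vp * (1 / (1 + lamp) + (1 / (1 + lamm)) / vg) with hAdef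
  set B : ℝ := (1 - 1 / (1 + lamp)) + (1 - 1 / (1 + lamm)) / vs with hBdef
  have hBA : B < A := hcap
  have h1p : (0:ℝ) < 1 + lamp := by linarith
  have h1m : (0:ℝ) < 1 + lamm := by linarith
  have hgple : 1 / (1 + lamp) ≤ 1 := by
    rw [div_le_one h1p]; linarith
  have hgmle : 1 / (1 + lamm) ≤ 1 := by
    rw [div_le_one h1m]; linarith
  have hB0 : 0 ≤ B := by
    have h2 : 0 ≤ (1 - 1 / (1 + lamm)) / vs := by
      apply div_nonneg _ hvs.le; linarith
    simp only [hBdef]; linarith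
  have hNpos : (0:ℝ) < (N:ℝ) := by exact_mod_cast hN
  rw [Filter.tendsto_atTop]
  intro M
  filter_upwards [Filter.eventually_ge_atTop
    (max ((N:ℝ) * l0 + 1) ((N:ℝ) * M + fhalf * B / (A - B) + 1))] with T hT
  have hT1 : (N:ℝ) * l0 < T := by
    have := le_trans (le_max_left _ _) hT; linarith
  obtain ⟨⟨hlpos, hllt⟩, heq⟩ := hlstar T hT1
  by_contra hcon
  push_neg at hcon
  set ℓ := lstar T with hℓ
  -- the shrinkage flux is at most B
  have hψle : ψ (ℓ / lcrit) ≤ 1 := by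
    rw [hψ _ (by positivity)]
    have : (0:ℝ) ≤ (Real.Gamma (1 + 1/α) / (ℓ / lcrit)) ^ α :=
      Real.rpow_nonneg (by positivity) α
    calc Real.exp (-((Real.Gamma (1 + 1/α) / (ℓ / lcrit)) ^ α)) ≤ Real.exp 0 := by
          apply Real.exp_le_exp.mpr; linarith
      _ = 1 := Real.exp_zero
  have hψ0' : 0 ≤ ψ (ℓ / lcrit) := by
    rw [hψ _ (by positivity)]; exact (Real.exp_pos _).le
  have hh0le : h0 ℓ ≤ B := by
    rw [hh0, hgp', hgm']
    calc ((1 - 1/(1+lamp)) + (1 - 1/(1+lamm)) / vs) * ψ (ℓ / lcrit)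
        ≤ ((1 - 1/(1+lamp)) + (1 - 1/(1+lamm)) / vs) * 1 :=
          mul_le_mul_of_nonneg_left hψle hB0
      _ = B := by rw [mul_one]
  -- but the growth flux exceeds B
  set s : ℝ := T - (N:ℝ) * ℓ with hsdef
  have hs1 : fhalf * B / (A - B) + 1 ≤ s := by
    have h2 := le_trans (le_max_right _ _) hT
    have h3 : (N:ℝ) * ℓ < (N:ℝ) * M := by
      exact mul_lt_mul_of_pos_left hcon hNpos
    simp only [hsdef]; linarith
  have hspos : 0 < s := by
    have : 0 ≤ fhalf * B / (A - B) := div_nonneg (by positivity) (by linarith)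
    linarith
  have hfs : 0 < fhalf + s := by linarith
  have hsB : fhalf * B < (A - B) * s := by
    have h4 : fhalf * B / (A - B) < s := by linarith
    rw [div_lt_iff₀ (by linarith : 0 < A - B)] at h4
    linarith [h4]
  have hh1gt : B < h1 T ℓ := by
    rw [hh1, hgp', hgm']
    rw [show vp * (1/(1+lamp) + 1/(1+lamm) / vg) * (s / (fhalf + s))
        = A * s / (fhalf + s) by rw [hAdef]; ring]
    rw [lt_div_iff₀ hfs]
    nlinarith
  rw [heq] at hh1gt
  linarith
end
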